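/- arXiv:1305.6601 — 2 statements merged into one kernel-verified Lean document; each statement's English description precedes it below -/
import Mathlib

section
/- Let f : I ⊆ (0,∞) → (0,∞) be differentiable on I°, let a, b ∈ I° with a < b, f' integrable on [a,b], and suppose |f'|^q is s-geometrically convex on [a,b] for some q ≥ 1 and s ∈ (0,1]. If |f'(a)| ≤ 1 and |f'(b)| ≤ 1, then |(f(a)+f(b))/2 − (1/(ln b − ln a)) ∫_a^b f(x)/x dx| ≤ ln(b/a) · (1/2)^{2−1/q} · [ a|f'(a)|^s g₁(θ₁)^{1/q} + b|f'(b)|^s g₁(θ₂)^{1/q} ]. -/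
open Real MeasureTheory Set

/-- `g` is `s`-geometrically convex on `J`. -/
def SGeometricallyConvexOn (s : ℝ) (J : Set ℝ) (g : ℝ → ℝ) : Prop :=
  ∀ x ∈ J, ∀ y ∈ J, ∀ t ∈ Set.Icc (0:ℝ) 1,
    g (x ^ t * y ^ (1 - t)) ≤ g x ^ t ^ s * g y ^ (1 - t) ^ s

noncomputable def g₁ (u : ℝ) : ℝ :=
  if u = 1 then 1/2 else (u * Real.log u - u + 1) / (Real.log u) ^ 2

noncomputable def g₂ (u : ℝ) : ℝ :=
  if u = 1 then 1 else (u - 1) / Real.log u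

lemma integral_t_rpow {u : ℝ} (hu : 0 < u) :
    ∫ t in (0:ℝ)..1, t * u ^ t = g₁ u := by
  rcases eq_or_ne u 1 with rfl | hu1
  · simp [g₁, Real.one_rpow, integral_id]
  · have hc : Real.log u ≠ 0 := Real.log_ne_zero_of_pos_of_ne_one hu hu1
    set c := Real.log u with hcdef
    have key : ∀ t : ℝ, HasDerivAt (fun t => Real.exp (c*t) * (c*t - 1) / c^2)
        (t * u ^ t) t := by
      intro t
      have h1 : HasDerivAt (fun t : ℝ => Real.exp (c*t)) (c * Real.exp (c*t)) t := by
        simpa [mul_comm] using (HasDerivAt.exp ((hasDerivAt_id t).const_mul c))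
      have h2 : HasDerivAt (fun t : ℝ => c*t - 1) c t := by
        simpa using ((hasDerivAt_id t).const_mul c).sub_const 1
      have := (h1.mul h2).div_const (c^2)
      have hut : u ^ t = Real.exp (c * t) := by
        rw [Real.rpow_def_of_pos hu, hcdef, mul_comm]
      refine this.congr_deriv ?_
      rw [hut]
      field_simp
      ring
    have hcont : Continuous fun t : ℝ => t * u ^ t :=
      continuous_id.mul (continuous_const.rpow continuous_id (fun _ => Or.inl hu.ne'))
    have := intervalIntegral.integral_eq_sub_of_hasDerivAt
      (f := fun t => Real.exp (c*t) * (c*t - 1) / c^2)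
      (fun t _ => key t) (hcont.intervalIntegrable 0 1)
    rw [this]
    have : Real.exp c = u := Real.exp_log hu
    simp only [mul_one, mul_zero, Real.exp_zero, g₁, if_neg hu1]
    rw [this, ← hcdef]
    field_simp
    ring

lemma g₁_nonneg {u : ℝ} (hu : 0 < u) : 0 ≤ g₁ u := by
  rw [← integral_t_rpow hu]
  apply intervalIntegral.integral_nonneg (by norm_num)
  intro t ht
  exact mul_nonneg ht.1 (Real.rpow_nonneg hu.le t)

lemma holder_bound (q : ℝ) (hq : 1 ≤ q) (w ψ v : ℝ → ℝ)
    (hw : Continuous w) (hw0 : ∀ t ∈ Set.Ioc (0:ℝ) 1, 0 ≤ w t)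
    (hw1 : ∀ t ∈ Set.Ioc (0:ℝ) 1, w t ≤ 1)
    (hv : Continuous v)
    (hψ : AEStronglyMeasurable ψ (volume.restrict (Set.Ioc (0:ℝ) 1)))
    (C : ℝ) (hvC : ∀ t ∈ Set.Ioc (0:ℝ) 1, v t ≤ C)
    (hb : ∀ t ∈ Set.Ioc (0:ℝ) 1, |ψ t| ^ q ≤ v t) :
    ∫ t in Set.Ioc (0:ℝ) 1, w t * |ψ t| ≤
      (∫ t in Set.Ioc (0:ℝ) 1, w t) ^ (1 - 1/q) *
        (∫ t in Set.Ioc (0:ℝ) 1, w t * v t) ^ (1/q) := by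
  have hmeas : MeasurableSet (Set.Ioc (0:ℝ) 1) := measurableSet_Ioc
  set μ := volume.restrict (Set.Ioc (0:ℝ) 1) with hμ
  haveI : IsFiniteMeasure μ := by
    constructor
    rw [hμ, Measure.restrict_apply_univ, Real.volume_Ioc]
    exact ENNReal.ofReal_lt_top
  have hmem : ∀ᵐ t ∂μ, t ∈ Set.Ioc (0:ℝ) 1 := ae_restrict_mem hmeas
  have hq0 : 0 < q := lt_of_lt_of_le one_pos hq
  have hC0 : 0 ≤ C := le_trans (Real.rpow_nonneg (abs_nonneg _) q)
    (le_trans (hb 1 (by norm_num)) (hvC 1 (by norm_num)))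
  have habs : ∀ t : ℝ, |ψ t| = (|ψ t| ^ q) ^ (1/q) := by
    intro t
    rw [← Real.rpow_mul (abs_nonneg _), mul_one_div, div_self hq0.ne', Real.rpow_one]
  have hψC : ∀ t ∈ Set.Ioc (0:ℝ) 1, |ψ t| ≤ C ^ (1/q) := by
    intro t ht
    rw [habs t]
    exact Real.rpow_le_rpow (Real.rpow_nonneg (abs_nonneg _) _)
      (le_trans (hb t ht) (hvC t ht)) (by positivity)
  have haesm_absψ : AEStronglyMeasurable (fun t => |ψ t|) μ := hψ.norm.congr (by
    filter_upwards with t; exact (Real.norm_eq_abs _))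
  have haesm1 : AEStronglyMeasurable (fun t => w t * |ψ t| ^ q) μ :=
    (hw.aestronglyMeasurable).mul
      ((haesm_absψ.aemeasurable.pow aemeasurable_const).aestronglyMeasurable)
  have hint_wv : Integrable (fun t => w t * v t) μ := (hw.mul hv).integrableOn_Ioc
  have hbd1 : ∀ t ∈ Set.Ioc (0:ℝ) 1, w t * |ψ t| ^ q ≤ w t * v t := fun t ht =>
    mul_le_mul_of_nonneg_left (hb t ht) (hw0 t ht)
  have hint1 : Integrable (fun t => w t * |ψ t| ^ q) μ := by
    refine Integrable.mono' hint_wv haesm1 ?_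
    filter_upwards [hmem] with t ht
    rw [Real.norm_eq_abs, abs_of_nonneg (mul_nonneg (hw0 t ht) (Real.rpow_nonneg (abs_nonneg _) _))]
    exact hbd1 t ht
  have hint_wψ : Integrable (fun t => w t * |ψ t|) μ := by
    refine Integrable.mono' (integrable_const (C ^ (1/q)))
      ((hw.aestronglyMeasurable).mul haesm_absψ) ?_
    filter_upwards [hmem] with t ht
    rw [Real.norm_eq_abs, abs_of_nonneg (mul_nonneg (hw0 t ht) (abs_nonneg _))]
    calc w t * |ψ t| ≤ 1 * |ψ t| := mul_le_mul_of_nonneg_right (hw1 t ht) (abs_nonneg _)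
      _ ≤ C ^ (1/q) := by rw [one_mul]; exact hψC t ht
  have step2 : ∫ t, w t * |ψ t| ^ q ∂μ ≤ ∫ t, w t * v t ∂μ := by
    refine integral_mono_ae hint1 hint_wv ?_
    filter_upwards [hmem] with t ht
    exact hbd1 t ht
  have hLq0 : 0 ≤ ∫ t, w t * |ψ t| ^ q ∂μ := by
    refine integral_nonneg_of_ae ?_
    filter_upwards [hmem] with t ht
    exact mul_nonneg (hw0 t ht) (Real.rpow_nonneg (abs_nonneg _) _)
  rcases eq_or_lt_of_le hq with rfl | hq1
  · calc ∫ t, w t * |ψ t| ∂μ ≤ ∫ t, w t * v t ∂μ := by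
          refine le_trans (le_of_eq (integral_congr_ae ?_)) step2
          filter_upwards with t
          rw [Real.rpow_one]
      _ = (∫ t, w t ∂μ) ^ (1 - 1/(1:ℝ)) * (∫ t, w t * v t ∂μ) ^ (1/(1:ℝ)) := by
          norm_num
  · set p := Real.conjExponent q with hp
    have hpq : p.HolderConjugate q := (Real.HolderConjugate.conjExponent hq1).symm
    have hp0 : 0 < p := hpq.pos
    have hsum : 1/p + 1/q = 1 := by
      have := hpq.inv_add_inv_eq_one
      rw [one_div, one_div]; linarith
    have key : ∫ t, w t * |ψ t| ∂μ ≤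
        (∫ t, w t ∂μ) ^ (1/p) * (∫ t, w t * |ψ t| ^ q ∂μ) ^ (1/q) := by
      have hF : MemLp (fun t => (w t) ^ (1/p)) (ENNReal.ofReal p) μ := by
        refine MemLp.of_bound
          ((hw.rpow_const (fun x => Or.inr (by positivity))).aestronglyMeasurable) 1 ?_
        filter_upwards [hmem] with t ht
        rw [Real.norm_eq_abs, abs_of_nonneg (Real.rpow_nonneg (hw0 t ht) _)]
        exact Real.rpow_le_one (hw0 t ht) (hw1 t ht) (by positivity)
      have hG : MemLp (fun t => (w t) ^ (1/q) * |ψ t|) (ENNReal.ofReal q) μ := by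
        refine MemLp.of_bound
          (((hw.rpow_const (fun x => Or.inr (by positivity))).aestronglyMeasurable).mul
            haesm_absψ) (C ^ (1/q)) ?_
        filter_upwards [hmem] with t ht
        rw [Real.norm_eq_abs,
          abs_of_nonneg (mul_nonneg (Real.rpow_nonneg (hw0 t ht) _) (abs_nonneg _))]
        calc (w t) ^ (1/q) * |ψ t| ≤ 1 * |ψ t| :=
              mul_le_mul_of_nonneg_right
                (Real.rpow_le_one (hw0 t ht) (hw1 t ht) (by positivity)) (abs_nonneg _)
          _ ≤ C ^ (1/q) := by rw [one_mul]; exact hψC t ht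
      have holder := integral_mul_le_Lp_mul_Lq_of_nonneg hpq ?_ ?_ hF hG
      · refine le_trans (le_of_eq (integral_congr_ae ?_)) (le_trans holder (le_of_eq ?_))
        · filter_upwards [hmem] with t ht
          rw [← mul_assoc, ← Real.rpow_add' (hw0 t ht) (by rw [hsum]; norm_num), hsum,
            Real.rpow_one]
        · congr 1
          · congr 1
            refine integral_congr_ae ?_
            filter_upwards [hmem] with t ht
            rw [← Real.rpow_mul (hw0 t ht), one_div_mul_cancel hp0.ne', Real.rpow_one]
          · congr 1
            refine integral_congr_ae ?_
            filter_upwards [hmem] with t ht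
            rw [Real.mul_rpow (Real.rpow_nonneg (hw0 t ht) _) (abs_nonneg _),
              ← Real.rpow_mul (hw0 t ht), one_div_mul_cancel hq0.ne', Real.rpow_one]
      · filter_upwards [hmem] with t ht
        exact Real.rpow_nonneg (hw0 t ht) _
      · filter_upwards [hmem] with t ht
        exact mul_nonneg (Real.rpow_nonneg (hw0 t ht) _) (abs_nonneg _)
    refine le_trans key ?_
    have h1p : 1/p = 1 - 1/q := by linarith
    rw [h1p]
    refine mul_le_mul_of_nonneg_left
      (Real.rpow_le_rpow hLq0 step2 (by positivity))
      (Real.rpow_nonneg (integral_nonneg_of_ae ?_) _)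
    filter_upwards [hmem] with t ht
    exact hw0 t ht

theorem stmt_2
    (I : Set ℝ) (hI : I.OrdConnected) (hIpos : I ⊆ Set.Ioi (0:ℝ))
    (f f' : ℝ → ℝ) (hfpos : ∀ x ∈ I, 0 < f x)
    (a b : ℝ) (ha : a ∈ interior I) (hb : b ∈ interior I) (hab : a < b)
    (hdiff : ∀ x ∈ interior I, HasDerivAt f (f' x) x)
    (hint : IntervalIntegrable f' volume a b)
    (q s : ℝ) (hq : 1 ≤ q) (hs : s ∈ Set.Ioc (0:ℝ) 1)
    (hconv : SGeometricallyConvexOn s (Set.Icc a b) (fun x => |f' x| ^ q))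
    (hfa : |f' a| ≤ 1) (hfb : |f' b| ≤ 1) :
    |(f a + f b) / 2 - (1 / (Real.log b - Real.log a)) * ∫ x in a..b, f x / x| ≤
      Real.log (b / a) * (1 / 2 : ℝ) ^ (2 - 1 / q) *
        (a * |f' a| ^ s * (g₁ ((b * |f' b| ^ s / (a * |f' a| ^ s)) ^ (q))) ^ (1 / q)
         + b * |f' b| ^ s * (g₁ ((a * |f' a| ^ s / (b * |f' b| ^ s)) ^ (q))) ^ (1 / q)) := by
  have hq0 : (0:ℝ) < q := lt_of_lt_of_le one_pos hq
  have hs0 : (0:ℝ) < s := hs.1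
  have hs1 : s ≤ 1 := hs.2
  have ha0 : 0 < a := hIpos (interior_subset ha)
  have hb0 : 0 < b := hIpos (interior_subset hb)
  set L : ℝ := Real.log b - Real.log a with hLdef
  have hL0 : 0 < L := sub_pos.2 (Real.log_lt_log ha0 hab)
  have hIccI : Set.Icc a b ⊆ I := hI.out (interior_subset ha) (interior_subset hb)
  have hsub : Set.Icc a b ⊆ interior I := by
    intro x hx
    rcases eq_or_lt_of_le hx.1 with rfl | hax
    · exact ha
    rcases eq_or_lt_of_le hx.2 with rfl | hxb
    · exact hb
    exact interior_maximal (fun y hy => hIccI ⟨hy.1.le, hy.2.le⟩) isOpen_Ioo ⟨hax, hxb⟩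
  set φ : ℝ → ℝ := fun t => a * Real.exp (L * t) with hφdef
  have hφ0 : φ 0 = a := by simp [hφdef]
  have hφ1 : φ 1 = b := by
    simp only [hφdef, mul_one, hLdef]
    rw [Real.exp_sub, Real.exp_log hb0, Real.exp_log ha0]
    field_simp
  have hφpos : ∀ t, 0 < φ t := fun t => mul_pos ha0 (Real.exp_pos _)
  have hφd : ∀ t, HasDerivAt φ (L * φ t) t := by
    intro t
    have h1 : HasDerivAt (fun t : ℝ => L * t) L t := by
      simpa using (hasDerivAt_id t).const_mul L
    have := (h1.exp).const_mul a
    refine this.congr_deriv ?_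
    show a * (Real.exp (L * t) * L) = L * (a * Real.exp (L * t))
    ring
  have hφmono : StrictMono φ := by
    intro t₁ t₂ h
    exact mul_lt_mul_of_pos_left (Real.exp_lt_exp.2 (by nlinarith)) ha0
  have hφcont : Continuous φ := by
    have : Continuous fun t : ℝ => L * t := continuous_const.mul continuous_id
    exact continuous_const.mul (Real.continuous_exp.comp this)
  have hφmem : ∀ t ∈ Set.Icc (0:ℝ) 1, φ t ∈ Set.Icc a b := by
    intro t ht
    constructor
    · rw [← hφ0]; exact (hφmono.le_iff_le).2 ht.1
    · rw [← hφ1]; exact (hφmono.le_iff_le).2 ht.2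
  have hφmemI : ∀ t ∈ Set.Icc (0:ℝ) 1, φ t ∈ interior I := fun t ht => hsub (hφmem t ht)
  have hφimg : φ '' Set.Icc 0 1 = Set.Icc a b := by
    apply Set.Subset.antisymm
    · rintro _ ⟨t, ht, rfl⟩; exact hφmem t ht
    · rw [← hφ0, ← hφ1]
      exact intermediate_value_Icc (by norm_num) hφcont.continuousOn
  have hrpow : ∀ t : ℝ, φ t = b ^ t * a ^ (1 - t) := by
    intro t
    rw [Real.rpow_def_of_pos hb0, Real.rpow_def_of_pos ha0, ← Real.exp_add]
    show a * Real.exp (L * t) = _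
    conv_lhs => rw [← Real.exp_log ha0]
    rw [← Real.exp_add]
    congr 1
    rw [hLdef]; ring
  set ψ : ℝ → ℝ := fun t => f' (φ t) * φ t with hψdef
  -- integrability of ψ
  have hψint : IntegrableOn ψ (Set.Icc (0:ℝ) 1) := by
    have hder : ∀ t ∈ Set.Icc (0:ℝ) 1, HasDerivWithinAt φ (L * φ t) (Set.Icc 0 1) t :=
      fun t _ => (hφd t).hasDerivWithinAt
    have hIcc : IntegrableOn f' (Set.Icc a b) := by
      rw [← intervalIntegrable_iff_integrableOn_Icc_of_le hab.le]
      exact hint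
    rw [← hφimg] at hIcc
    have h2 := (integrableOn_image_iff_integrableOn_abs_deriv_smul measurableSet_Icc hder
      (hφmono.injective.injOn) f').mp hIcc
    have h3 : IntegrableOn (fun t => |L * φ t| * f' (φ t)) (Set.Icc (0:ℝ) 1) := by
      simpa [smul_eq_mul] using h2
    have h4 : IntegrableOn (fun t => (1/L) * (|L * φ t| * f' (φ t))) (Set.Icc (0:ℝ) 1) :=
      h3.const_mul (1/L)
    refine h4.congr_fun ?_ measurableSet_Icc
    intro t _
    have habs : |L * φ t| = L * φ t := abs_of_pos (mul_pos hL0 (hφpos t))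
    simp only [habs, hψdef]
    field_simp
  have hψmeas : AEStronglyMeasurable ψ (volume.restrict (Set.Ioc (0:ℝ) 1)) :=
    (hψint.mono_set Set.Ioc_subset_Icc_self).aestronglyMeasurable
  have hfc : ContinuousOn f (Set.Icc a b) :=
    fun x hx => ((hdiff x (hsub hx)).continuousAt).continuousWithinAt
  have hfφc : ContinuousOn (fun t => f (φ t)) (Set.Icc (0:ℝ) 1) :=
    hfc.comp hφcont.continuousOn hφmem
  -- substitution
  have hsubst : ∫ x in a..b, f x / x = L * ∫ t in (0:ℝ)..1, f (φ t) := by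
    have hder : ∀ t ∈ Set.Icc (0:ℝ) 1, HasDerivWithinAt φ (L * φ t) (Set.Icc 0 1) t :=
      fun t _ => (hφd t).hasDerivWithinAt
    rw [intervalIntegral.integral_of_le hab.le, intervalIntegral.integral_of_le zero_le_one,
      ← integral_Icc_eq_integral_Ioc, ← integral_Icc_eq_integral_Ioc, ← hφimg,
      integral_image_eq_integral_abs_deriv_smul measurableSet_Icc hder
        hφmono.injective.injOn (fun x => f x / x), ← integral_const_mul]
    refine setIntegral_congr_fun measurableSet_Icc ?_
    intro t _
    have habs : |L * φ t| = L * φ t := abs_of_pos (mul_pos hL0 (hφpos t))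
    simp only [smul_eq_mul, habs]
    have hφt := (hφpos t).ne'
    field_simp
  -- FTC / integration by parts
  have hIntf : IntervalIntegrable (fun t => f (φ t)) volume 0 1 := by
    apply ContinuousOn.intervalIntegrable
    rw [Set.uIcc_of_le zero_le_one]
    exact hfφc
  have hIntψmul : ∀ g : ℝ → ℝ, Continuous g →
      IntervalIntegrable (fun t => g t * ψ t) volume 0 1 := by
    intro g hg
    rw [intervalIntegrable_iff_integrableOn_Icc_of_le zero_le_one]
    exact IntegrableOn.continuousOn_mul hg.continuousOn hψint isCompact_Icc
  have hInt2 : IntervalIntegrable (fun t => (t - 1/2) * (L * ψ t)) volume 0 1 := by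
    have := hIntψmul (fun t => (t - 1/2) * L) ((continuous_id.sub continuous_const).mul continuous_const)
    simpa [mul_assoc] using this
  have hparts : (f a + f b) / 2 - ∫ t in (0:ℝ)..1, f (φ t)
      = ∫ t in (0:ℝ)..1, (t - 1/2) * (L * ψ t) := by
    have hH : ∀ t ∈ Set.uIcc (0:ℝ) 1, HasDerivAt (fun t => (t - 1/2) * f (φ t))
        (f (φ t) + (t - 1/2) * (L * ψ t)) t := by
      intro t ht
      rw [Set.uIcc_of_le zero_le_one] at ht
      have h1 : HasDerivAt (fun t : ℝ => t - 1/2) 1 t := (hasDerivAt_id t).sub_const _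
      have h2 : HasDerivAt (fun t => f (φ t)) (f' (φ t) * (L * φ t)) t :=
        (hdiff (φ t) (hφmemI t ht)).comp t (hφd t)
      have := h1.mul h2
      refine this.congr_deriv ?_
      show 1 * f (φ t) + (t - 1/2) * (f' (φ t) * (L * φ t)) = f (φ t) + (t - 1/2) * (L * (f' (φ t) * φ t))
      ring
    have hFTC := intervalIntegral.integral_eq_sub_of_hasDerivAt hH (hIntf.add hInt2)
    rw [intervalIntegral.integral_add hIntf hInt2, hφ0, hφ1] at hFTC
    norm_num at hFTC
    linarith
  -- splitting and abs bound
  set S1 : ℝ := ∫ t in Set.Ioc (0:ℝ) 1, t * |ψ t| with hS1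
  set S2 : ℝ := ∫ t in Set.Ioc (0:ℝ) 1, (1 - t) * |ψ t| with hS2
  have hsplit : |∫ t in (0:ℝ)..1, (t - 1/2) * (L * ψ t)| ≤
      L * ((1/2) * S1 + (1/2) * S2) := by
    have i1 : IntervalIntegrable (fun t => t * ψ t) volume 0 1 :=
      hIntψmul _ continuous_id
    have i2 : IntervalIntegrable (fun t => (1 - t) * ψ t) volume 0 1 :=
      hIntψmul _ (continuous_const.sub continuous_id)
    have hdecomp : (∫ t in (0:ℝ)..1, (t - 1/2) * (L * ψ t))
        = (L/2) * (∫ t in (0:ℝ)..1, t * ψ t) - (L/2) * (∫ t in (0:ℝ)..1, (1 - t) * ψ t) := by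
      rw [← intervalIntegral.integral_const_mul, ← intervalIntegral.integral_const_mul,
        ← intervalIntegral.integral_sub (i1.const_mul _) (i2.const_mul _)]
      refine intervalIntegral.integral_congr ?_
      intro t _
      ring
    have habs1 : |∫ t in (0:ℝ)..1, t * ψ t| ≤ S1 := by
      refine le_trans (intervalIntegral.abs_integral_le_integral_abs zero_le_one) (le_of_eq ?_)
      rw [hS1, ← intervalIntegral.integral_of_le zero_le_one]
      refine intervalIntegral.integral_congr ?_
      intro t ht
      rw [Set.uIcc_of_le zero_le_one] at ht
      show |t * ψ t| = t * |ψ t|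
      rw [abs_mul, abs_of_nonneg ht.1]
    have habs2 : |∫ t in (0:ℝ)..1, (1 - t) * ψ t| ≤ S2 := by
      refine le_trans (intervalIntegral.abs_integral_le_integral_abs zero_le_one) (le_of_eq ?_)
      rw [hS2, ← intervalIntegral.integral_of_le zero_le_one]
      refine intervalIntegral.integral_congr ?_
      intro t ht
      rw [Set.uIcc_of_le zero_le_one] at ht
      show |(1 - t) * ψ t| = (1 - t) * |ψ t|
      rw [abs_mul, abs_of_nonneg (by linarith [ht.2] : (0:ℝ) ≤ 1 - t)]
    rw [hdecomp]
    have htri : |(L/2) * (∫ t in (0:ℝ)..1, t * ψ t) - (L/2) * (∫ t in (0:ℝ)..1, (1 - t) * ψ t)|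
        ≤ (L/2) * |∫ t in (0:ℝ)..1, t * ψ t| + (L/2) * |∫ t in (0:ℝ)..1, (1 - t) * ψ t| := by
      refine le_trans (abs_sub _ _) (le_of_eq ?_)
      rw [abs_mul, abs_mul, abs_of_pos (by linarith : (0:ℝ) < L/2)]
    refine le_trans htri ?_
    have hL2 : (0:ℝ) ≤ L / 2 := by linarith
    refine le_trans (add_le_add (mul_le_mul_of_nonneg_left habs1 hL2)
      (mul_le_mul_of_nonneg_left habs2 hL2)) (le_of_eq ?_)
    ring
  -- reduction of the LHS
  have hLHS : |(f a + f b) / 2 - (1 / (Real.log b - Real.log a)) * ∫ x in a..b, f x / x|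
      = |∫ t in (0:ℝ)..1, (t - 1/2) * (L * ψ t)| := by
    rw [hsubst, ← hLdef]
    rw [one_div, inv_mul_cancel_left₀ hL0.ne']
    rw [← hparts]
  rw [hLHS, Real.log_div hb0.ne' ha0.ne', ← hLdef]
  -- helpers
  have hg10 : g₁ 0 = 0 := by
    rw [g₁]
    norm_num [Real.log_zero]
  have hzero_case : (∀ x ∈ Set.Icc a b, f x = f a) →
      |∫ t in (0:ℝ)..1, (t - 1/2) * (L * ψ t)| = 0 := by
    intro hcst
    rw [← hparts]
    have hfba : f b = f a := hcst b (Set.right_mem_Icc.2 hab.le)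
    have hintc : ∫ t in (0:ℝ)..1, f (φ t) = f a := by
      have hEq : ∀ t ∈ Set.uIcc (0:ℝ) 1, f (φ t) = f a := by
        intro t ht
        rw [Set.uIcc_of_le zero_le_one] at ht
        exact hcst _ (hφmem t ht)
      rw [intervalIntegral.integral_congr (g := fun _ => f a) hEq]
      simp
    rw [hintc, hfba]
    have : (f a + f a) / 2 - f a = 0 := by ring
    rw [this, abs_zero]
  have hMVT : ∀ x y : ℝ, a ≤ x → x < y → y ≤ b → (∀ c ∈ Set.Ioo x y, f' c = 0) →
      f y = f x := by
    intro x y hax hxy hyb hz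
    obtain ⟨c, hc, hceq⟩ := exists_hasDerivAt_eq_slope f f' hxy
      (hfc.mono (Set.Icc_subset_Icc hax hyb))
      (fun u hu => hdiff u (hsub ⟨le_trans hax hu.1.le, le_trans hu.2.le hyb⟩))
    rw [hz c hc] at hceq
    have h2 := hceq.symm
    rw [div_eq_zero_iff] at h2
    rcases h2 with h2 | h2
    · linarith
    · linarith
  have hrep : ∀ x ∈ Set.Ioo a b, ∃ t : ℝ, 0 < t ∧ t < 1 ∧ b ^ t * a ^ (1 - t) = x := by
    intro x hx
    have hx0 : 0 < x := lt_trans ha0 hx.1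
    have hl1 : Real.log a < Real.log x := Real.log_lt_log ha0 hx.1
    have hl2 : Real.log x < Real.log b := Real.log_lt_log hx0 hx.2
    refine ⟨(Real.log x - Real.log a)/L, div_pos (by linarith) hL0,
      (div_lt_one hL0).2 (by rw [hLdef]; linarith), ?_⟩
    have ht : (Real.log x - Real.log a)/L * L = Real.log x - Real.log a :=
      div_mul_cancel₀ _ hL0.ne'
    have harg : Real.log b * ((Real.log x - Real.log a)/L)
        + Real.log a * (1 - (Real.log x - Real.log a)/L) = Real.log x := by
      calc Real.log b * ((Real.log x - Real.log a)/L)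
          + Real.log a * (1 - (Real.log x - Real.log a)/L)
          = Real.log a + ((Real.log x - Real.log a)/L) * L := by rw [hLdef]; ring
        _ = Real.log x := by rw [ht]; ring
    rw [Real.rpow_def_of_pos hb0, Real.rpow_def_of_pos ha0, ← Real.exp_add, harg,
      Real.exp_log hx0]
  rcases eq_or_ne (f' a) 0 with h0 | hA0
  · -- edge case f' a = 0
    have hzA : ∀ x ∈ Set.Ico a b, f' x = 0 := by
      intro x hx
      rcases eq_or_lt_of_le hx.1 with rfl | hax
      · exact h0
      obtain ⟨t, ht0, ht1, hteq⟩ := hrep x ⟨hax, hx.2⟩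
      have hcv := hconv a (Set.left_mem_Icc.2 hab.le) b (Set.right_mem_Icc.2 hab.le)
        (1 - t) ⟨by linarith, by linarith⟩
      simp only [sub_sub_cancel] at hcv
      have harg : a ^ (1 - t) * b ^ t = x := by rw [mul_comm]; exact hteq
      rw [harg, h0, abs_zero, Real.zero_rpow hq0.ne',
        Real.zero_rpow (ne_of_gt (Real.rpow_pos_of_pos (by linarith : (0:ℝ) < 1 - t) s)),
        zero_mul] at hcv
      have h1 : |f' x| ^ q = 0 := le_antisymm hcv (Real.rpow_nonneg (abs_nonneg _) _)
      exact abs_eq_zero.1 ((Real.rpow_eq_zero (abs_nonneg _) hq0.ne').1 h1)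
    have hcst : ∀ x ∈ Set.Icc a b, f x = f a := by
      intro x hx
      rcases eq_or_lt_of_le hx.1 with rfl | hax
      · rfl
      exact hMVT a x le_rfl hax hx.2
        (fun c hc => hzA c ⟨hc.1.le, lt_of_lt_of_le hc.2 hx.2⟩)
    have hR : a * |f' a| ^ s * (g₁ ((b * |f' b| ^ s / (a * |f' a| ^ s)) ^ q)) ^ (1/q)
        + b * |f' b| ^ s * (g₁ ((a * |f' a| ^ s / (b * |f' b| ^ s)) ^ q)) ^ (1/q) = 0 := by
      simp [h0, abs_zero, Real.zero_rpow hs0.ne', Real.zero_rpow hq0.ne', hg10,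
        Real.zero_rpow (one_div_ne_zero hq0.ne'), one_div, Real.zero_rpow (inv_ne_zero hq0.ne')]
    rw [hzero_case hcst, hR, mul_zero]
  rcases eq_or_ne (f' b) 0 with h0 | hB0
  · -- edge case f' b = 0
    have hzB : ∀ x ∈ Set.Ioc a b, f' x = 0 := by
      intro x hx
      rcases eq_or_lt_of_le hx.2 with rfl | hxb
      · exact h0
      obtain ⟨t, ht0, ht1, hteq⟩ := hrep x ⟨hx.1, hxb⟩
      have hcv := hconv b (Set.right_mem_Icc.2 hab.le) a (Set.left_mem_Icc.2 hab.le)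
        t ⟨ht0.le, ht1.le⟩
      simp only at hcv
      rw [hteq, h0, abs_zero, Real.zero_rpow hq0.ne',
        Real.zero_rpow (ne_of_gt (Real.rpow_pos_of_pos ht0 s)), zero_mul] at hcv
      have h1 : |f' x| ^ q = 0 := le_antisymm hcv (Real.rpow_nonneg (abs_nonneg _) _)
      exact abs_eq_zero.1 ((Real.rpow_eq_zero (abs_nonneg _) hq0.ne').1 h1)
    have hcstb : ∀ x ∈ Set.Icc a b, f x = f b := by
      intro x hx
      rcases eq_or_lt_of_le hx.2 with rfl | hxb
      · rfl
      exact (hMVT x b hx.1 hxb le_rfl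
        (fun c hc => hzB c ⟨lt_of_le_of_lt hx.1 hc.1, hc.2.le⟩)).symm
    have hcst : ∀ x ∈ Set.Icc a b, f x = f a := by
      intro x hx
      rw [hcstb x hx, ← hcstb a (Set.left_mem_Icc.2 hab.le)]
    have hR : a * |f' a| ^ s * (g₁ ((b * |f' b| ^ s / (a * |f' a| ^ s)) ^ q)) ^ (1/q)
        + b * |f' b| ^ s * (g₁ ((a * |f' a| ^ s / (b * |f' b| ^ s)) ^ q)) ^ (1/q) = 0 := by
      simp [h0, abs_zero, Real.zero_rpow hs0.ne', Real.zero_rpow hq0.ne', hg10,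
        Real.zero_rpow (one_div_ne_zero hq0.ne'), one_div, Real.zero_rpow (inv_ne_zero hq0.ne')]
    rw [hzero_case hcst, hR, mul_zero]
  -- main case
  have hα : 0 < |f' a| := abs_pos.2 hA0
  have hβ : 0 < |f' b| := abs_pos.2 hB0
  set P : ℝ := a * |f' a| ^ s with hPdef
  set Q : ℝ := b * |f' b| ^ s with hQdef
  have hP0 : 0 < P := mul_pos ha0 (Real.rpow_pos_of_pos hα s)
  have hQ0 : 0 < Q := mul_pos hb0 (Real.rpow_pos_of_pos hβ s)
  have hPq0 : (0:ℝ) < P ^ q := Real.rpow_pos_of_pos hP0 q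
  have hQq0 : (0:ℝ) < Q ^ q := Real.rpow_pos_of_pos hQ0 q
  set v : ℝ → ℝ := fun t => (P ^ q) ^ (1 - t) * (Q ^ q) ^ t with hvdef
  have hv : Continuous v := by
    refine Continuous.mul ?_ ?_
    · exact continuous_const.rpow (continuous_const.sub continuous_id) (fun _ => Or.inl hPq0.ne')
    · exact continuous_const.rpow continuous_id (fun _ => Or.inl hQq0.ne')
  have hfact : ∀ X : ℝ, 0 < X → ∀ u : ℝ, 0 ≤ u → u ≤ 1 → X ^ u ≤ max X 1 := by
    intro X hX u hu0 hu1
    rcases le_total X 1 with h | h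
    · exact le_max_of_le_right (Real.rpow_le_one hX.le h hu0)
    · refine le_max_of_le_left ?_
      calc X ^ u ≤ X ^ (1:ℝ) := Real.rpow_le_rpow_of_exponent_le h hu1
        _ = X := Real.rpow_one X
  have hvC : ∀ t ∈ Set.Ioc (0:ℝ) 1, v t ≤ max (P ^ q) 1 * max (Q ^ q) 1 := by
    intro t ht
    exact mul_le_mul (hfact _ hPq0 _ (by linarith [ht.2]) (by linarith [ht.1.le]))
      (hfact _ hQq0 _ ht.1.le ht.2) (Real.rpow_nonneg hQq0.le _)
      (le_trans zero_le_one (le_max_right _ _))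
  have hexp : ∀ u : ℝ, 0 ≤ u → u ≤ 1 → s * u ≤ u ^ s := by
    intro u hu0 hu1
    rcases eq_or_lt_of_le hu0 with rfl | hu0'
    · rw [Real.zero_rpow hs0.ne']
      simp
    · calc s * u ≤ 1 * u := mul_le_mul_of_nonneg_right hs1 hu0
        _ = u ^ (1:ℝ) := by rw [one_mul, Real.rpow_one]
        _ ≤ u ^ s := Real.rpow_le_rpow_of_exponent_ge hu0' hu1 hs1
  have hbd : ∀ t ∈ Set.Ioc (0:ℝ) 1, |ψ t| ^ q ≤ v t := by
    intro t ht
    have ht0 : 0 < t := ht.1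
    have ht1 : t ≤ 1 := ht.2
    have h1t0 : (0:ℝ) ≤ 1 - t := by linarith
    have hcv := hconv b (Set.right_mem_Icc.2 hab.le) a (Set.left_mem_Icc.2 hab.le)
      t ⟨ht0.le, ht1⟩
    simp only at hcv
    rw [← hrpow t] at hcv
    have hfb2 : (|f' b| ^ q) ^ (t ^ s) ≤ (|f' b| ^ q) ^ (s * t) :=
      Real.rpow_le_rpow_of_exponent_ge (Real.rpow_pos_of_pos hβ q)
        (Real.rpow_le_one (abs_nonneg _) hfb hq0.le) (hexp t ht0.le ht1)
    have hfa2 : (|f' a| ^ q) ^ ((1 - t) ^ s) ≤ (|f' a| ^ q) ^ (s * (1 - t)) :=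
      Real.rpow_le_rpow_of_exponent_ge (Real.rpow_pos_of_pos hα q)
        (Real.rpow_le_one (abs_nonneg _) hfa hq0.le) (hexp (1 - t) h1t0 (by linarith))
    have hcv2 : |f' (φ t)| ^ q ≤ (|f' b| ^ q) ^ (s * t) * (|f' a| ^ q) ^ (s * (1 - t)) :=
      le_trans hcv (mul_le_mul hfb2 hfa2
        (Real.rpow_nonneg (Real.rpow_nonneg (abs_nonneg _) _) _)
        (Real.rpow_nonneg (Real.rpow_nonneg (abs_nonneg _) _) _))
    have habsψ : |ψ t| = |f' (φ t)| * φ t := by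
      show |f' (φ t) * φ t| = _
      rw [abs_mul, abs_of_pos (hφpos t)]
    have hφq : (φ t) ^ q = (b ^ q) ^ t * (a ^ q) ^ (1 - t) := by
      rw [hrpow t, Real.mul_rpow (Real.rpow_nonneg hb0.le _) (Real.rpow_nonneg ha0.le _),
        ← Real.rpow_mul hb0.le, ← Real.rpow_mul ha0.le, ← Real.rpow_mul hb0.le,
        ← Real.rpow_mul ha0.le, mul_comm t q, mul_comm (1 - t) q]
    have e1 : (P ^ q) ^ (1 - t) = (a ^ q) ^ (1 - t) * (|f' a| ^ q) ^ (s * (1 - t)) := by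
      rw [hPdef, Real.mul_rpow ha0.le (Real.rpow_nonneg (abs_nonneg _) _),
        Real.mul_rpow (Real.rpow_nonneg ha0.le _)
          (Real.rpow_nonneg (Real.rpow_nonneg (abs_nonneg _) _) _)]
      congr 1
      rw [← Real.rpow_mul (abs_nonneg _), ← Real.rpow_mul (abs_nonneg _),
        ← Real.rpow_mul (abs_nonneg _)]
      congr 1
      ring
    have e2 : (Q ^ q) ^ t = (b ^ q) ^ t * (|f' b| ^ q) ^ (s * t) := by
      rw [hQdef, Real.mul_rpow hb0.le (Real.rpow_nonneg (abs_nonneg _) _),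
        Real.mul_rpow (Real.rpow_nonneg hb0.le _)
          (Real.rpow_nonneg (Real.rpow_nonneg (abs_nonneg _) _) _)]
      congr 1
      rw [← Real.rpow_mul (abs_nonneg _), ← Real.rpow_mul (abs_nonneg _),
        ← Real.rpow_mul (abs_nonneg _)]
      congr 1
      ring
    calc |ψ t| ^ q = |f' (φ t)| ^ q * (φ t) ^ q := by
          rw [habsψ, Real.mul_rpow (abs_nonneg _) (hφpos t).le]
      _ ≤ ((|f' b| ^ q) ^ (s * t) * (|f' a| ^ q) ^ (s * (1 - t)))
            * ((b ^ q) ^ t * (a ^ q) ^ (1 - t)) := by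
          rw [hφq]
          refine mul_le_mul_of_nonneg_right hcv2 ?_
          positivity
      _ = v t := by
          show _ = (P ^ q) ^ (1 - t) * (Q ^ q) ^ t
          rw [e1, e2]
          ring
  have hH1 := holder_bound q hq (fun t => t) ψ v continuous_id
    (fun t ht => ht.1.le) (fun t ht => ht.2) hv hψmeas _ hvC hbd
  have hH2 := holder_bound q hq (fun t => 1 - t) ψ v (continuous_const.sub continuous_id)
    (fun t ht => by show (0:ℝ) ≤ 1 - t; linarith [ht.2])
    (fun t ht => by show (1:ℝ) - t ≤ 1; linarith [ht.1]) hv hψmeas _ hvC hbd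
  have hwt : ∫ t in Set.Ioc (0:ℝ) 1, t = 1/2 := by
    rw [← intervalIntegral.integral_of_le zero_le_one, integral_id]
    norm_num
  have hwt2 : ∫ t in Set.Ioc (0:ℝ) 1, (1 - t) = 1/2 := by
    rw [← intervalIntegral.integral_of_le zero_le_one,
      intervalIntegral.integral_sub intervalIntegrable_const intervalIntegral.intervalIntegrable_id,
      integral_id, intervalIntegral.integral_const]
    norm_num
  set θ₁ : ℝ := (Q / P) ^ q with hθ₁def
  set θ₂ : ℝ := (P / Q) ^ q with hθ₂def
  have hθ₁0 : 0 < θ₁ := Real.rpow_pos_of_pos (div_pos hQ0 hP0) q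
  have hθ₂0 : 0 < θ₂ := Real.rpow_pos_of_pos (div_pos hP0 hQ0) q
  have hv1 : ∀ t : ℝ, v t = P ^ q * θ₁ ^ t := by
    intro t
    show (P ^ q) ^ (1 - t) * (Q ^ q) ^ t = _
    rw [hθ₁def, Real.div_rpow hQ0.le hP0.le,
      Real.div_rpow (Real.rpow_nonneg hQ0.le _) (Real.rpow_nonneg hP0.le _)]
    have hp1t : (P ^ q) ^ (1 - t) * (P ^ q) ^ t = P ^ q := by
      rw [← Real.rpow_add hPq0]
      norm_num
    have hPt0 : (0:ℝ) < (P ^ q) ^ t := Real.rpow_pos_of_pos hPq0 t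
    field_simp
    rw [hp1t]
  have hv2 : ∀ t : ℝ, v t = Q ^ q * θ₂ ^ (1 - t) := by
    intro t
    show (P ^ q) ^ (1 - t) * (Q ^ q) ^ t = _
    rw [hθ₂def, Real.div_rpow hP0.le hQ0.le,
      Real.div_rpow (Real.rpow_nonneg hP0.le _) (Real.rpow_nonneg hQ0.le _)]
    have hq1t : (Q ^ q) ^ t * (Q ^ q) ^ (1 - t) = Q ^ q := by
      rw [← Real.rpow_add hQq0]
      norm_num
    have hQt0 : (0:ℝ) < (Q ^ q) ^ (1 - t) := Real.rpow_pos_of_pos hQq0 _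
    field_simp
    rw [hq1t]
  have hvint1 : ∫ t in Set.Ioc (0:ℝ) 1, t * v t = P ^ q * g₁ θ₁ := by
    rw [← intervalIntegral.integral_of_le zero_le_one]
    have hEq : ∀ t ∈ Set.uIcc (0:ℝ) 1, t * v t = P ^ q * (t * θ₁ ^ t) := by
      intro t _
      rw [hv1 t]
      ring
    rw [intervalIntegral.integral_congr (g := fun t => P ^ q * (t * θ₁ ^ t)) hEq,
      intervalIntegral.integral_const_mul, integral_t_rpow hθ₁0]
  have hvint2 : ∫ t in Set.Ioc (0:ℝ) 1, (1 - t) * v t = Q ^ q * g₁ θ₂ := by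
    rw [← intervalIntegral.integral_of_le zero_le_one]
    have hEq : ∀ t ∈ Set.uIcc (0:ℝ) 1, (1 - t) * v t
        = (fun u => Q ^ q * (u * θ₂ ^ u)) (1 - t) := by
      intro t _
      simp only
      rw [hv2 t]
      ring
    rw [intervalIntegral.integral_congr (g := fun t => (fun u => Q ^ q * (u * θ₂ ^ u)) (1 - t)) hEq,
      intervalIntegral.integral_comp_sub_left (fun u => Q ^ q * (u * θ₂ ^ u)) 1]
    simp only [sub_self, sub_zero]
    rw [intervalIntegral.integral_const_mul, integral_t_rpow hθ₂0]
  have hPq : (P ^ q * g₁ θ₁) ^ (1/q) = P * (g₁ θ₁) ^ (1/q) := by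
    rw [Real.mul_rpow hPq0.le (g₁_nonneg hθ₁0), ← Real.rpow_mul hP0.le, mul_one_div,
      div_self hq0.ne', Real.rpow_one]
  have hQq : (Q ^ q * g₁ θ₂) ^ (1/q) = Q * (g₁ θ₂) ^ (1/q) := by
    rw [Real.mul_rpow hQq0.le (g₁_nonneg hθ₂0), ← Real.rpow_mul hQ0.le, mul_one_div,
      div_self hq0.ne', Real.rpow_one]
  have b1 : S1 ≤ (1/2 : ℝ) ^ (1 - 1/q) * (P * (g₁ θ₁) ^ (1/q)) := by
    rw [hS1]
    calc (∫ t in Set.Ioc (0:ℝ) 1, t * |ψ t|)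
        ≤ (∫ t in Set.Ioc (0:ℝ) 1, t) ^ (1 - 1/q)
          * (∫ t in Set.Ioc (0:ℝ) 1, t * v t) ^ (1/q) := hH1
      _ = (1/2 : ℝ) ^ (1 - 1/q) * (P * (g₁ θ₁) ^ (1/q)) := by
          rw [hwt, hvint1, hPq]
  have b2 : S2 ≤ (1/2 : ℝ) ^ (1 - 1/q) * (Q * (g₁ θ₂) ^ (1/q)) := by
    rw [hS2]
    calc (∫ t in Set.Ioc (0:ℝ) 1, (1 - t) * |ψ t|)
        ≤ (∫ t in Set.Ioc (0:ℝ) 1, (1 - t)) ^ (1 - 1/q)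
          * (∫ t in Set.Ioc (0:ℝ) 1, (1 - t) * v t) ^ (1/q) := hH2
      _ = (1/2 : ℝ) ^ (1 - 1/q) * (Q * (g₁ θ₂) ^ (1/q)) := by
          rw [hwt2, hvint2, hQq]
  calc |∫ t in (0:ℝ)..1, (t - 1/2) * (L * ψ t)|
      ≤ L * ((1/2) * S1 + (1/2) * S2) := hsplit
    _ ≤ L * ((1/2) * ((1/2 : ℝ) ^ (1 - 1/q) * (P * (g₁ θ₁) ^ (1/q)))
          + (1/2) * ((1/2 : ℝ) ^ (1 - 1/q) * (Q * (g₁ θ₂) ^ (1/q)))) := by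
        refine mul_le_mul_of_nonneg_left (add_le_add
          (mul_le_mul_of_nonneg_left b1 (by norm_num))
          (mul_le_mul_of_nonneg_left b2 (by norm_num))) hL0.le
    _ = L * (1/2 : ℝ) ^ (2 - 1/q) * (P * (g₁ θ₁) ^ (1/q) + Q * (g₁ θ₂) ^ (1/q)) := by
        rw [show (2:ℝ) - 1/q = 1 + (1 - 1/q) by ring,
          Real.rpow_add (by norm_num : (0:ℝ) < 1/2), Real.rpow_one]
        ring
end

section
/- Let f : I ⊆ (0,∞) → (0,∞) be differentiable on I°, let a, b ∈ I° with a < b, f' integrable on [a,b], and suppose |f'|^q is s-geometrically convex on [a,b] for some q ≥ 1 and s ∈ (0,1]. If |f'(a)| ≥ 1 and |f'(b)| ≥ 1, then |f(√(ab)) − (1/(ln b − ln a)) ∫_a^b f(x)/x dx| ≤ ln(b/a) · (1/2)^{3−1/q} · [ a|f'(a)||f'(b)|^{1−s} g₁(θ₃)^{1/q} + b|f'(b)||f'(a)|^{1−s} g₁(θ₄)^{1/q} ]. -/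
open Real MeasureTheory Set

lemma aux_tpow_le {t s : ℝ} (ht0 : 0 ≤ t) (ht1 : t ≤ 1) (hs0 : 0 < s) (hs1 : s ≤ 1) :
    t ^ s ≤ s * t + (1 - s) := by
  have h := @Real.geom_mean_le_arith_mean2_weighted s (1-s) t 1 hs0.le (by linarith) ht0
    zero_le_one (by ring)
  rw [Real.one_rpow, mul_one, mul_one] at h
  exact h

lemma aux_texp (c : ℝ) (hc : c ≠ 0) :
    ∫ t in (0:ℝ)..(1/2), t * Real.exp (c*t)
      = (Real.exp (c/2) * (c/2 - 1) + 1) / c^2 := by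
  have h : ∀ t ∈ Set.uIcc (0:ℝ) (1/2),
      HasDerivAt (fun t : ℝ => Real.exp (c*t) * (c*t - 1) / c^2) (t * Real.exp (c*t)) t := by
    intro t _
    have h1 : HasDerivAt (fun t : ℝ => c * t) c t := by
      simpa using (hasDerivAt_id t).const_mul c
    have h2 : HasDerivAt (fun t : ℝ => Real.exp (c*t)) (Real.exp (c*t) * c) t :=
      (Real.hasDerivAt_exp _).comp t h1
    have h3 : HasDerivAt (fun t : ℝ => c * t - 1) c t := h1.sub_const 1
    have h4 := (h2.mul h3).div_const (c^2)
    refine h4.congr_deriv ?_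
    rw [div_eq_iff (pow_ne_zero 2 hc)]
    ring
  have hint : IntervalIntegrable (fun t : ℝ => t * Real.exp (c*t)) volume 0 (1/2) := by
    apply Continuous.intervalIntegrable
    continuity
  have := intervalIntegral.integral_eq_sub_of_hasDerivAt h hint
  rw [this]
  field_simp
  rw [mul_zero, Real.exp_zero]
  ring

lemma aux_J {θ q : ℝ} (hθ : 0 < θ) (hq : 0 < q) :
    ∫ t in (0:ℝ)..(1/2), t * θ ^ (q*t) = g₁ (θ ^ (q/2)) / 4 := by
  rcases eq_or_ne θ 1 with rfl | hθ1
  · simp only [Real.one_rpow, mul_one, g₁, if_pos]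
    rw [integral_id]
    norm_num
  · set c := q * Real.log θ with hc
    have hlog : Real.log θ ≠ 0 := Real.log_ne_zero_of_pos_of_ne_one hθ hθ1
    have hcne : c ≠ 0 := mul_ne_zero hq.ne' hlog
    have hrw : ∀ t : ℝ, θ ^ (q*t) = Real.exp (c*t) := by
      intro t
      rw [Real.rpow_def_of_pos hθ, hc]
      ring_nf
    have hu : θ ^ (q/2) = Real.exp (c/2) := by
      rw [Real.rpow_def_of_pos hθ, hc]
      ring_nf
    have hune : θ ^ (q/2) ≠ 1 := by
      rw [hu]
      simp [Real.exp_eq_one_iff, hcne, div_eq_zero_iff]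
    have hlogu : Real.log (θ ^ (q/2)) = c/2 := by
      rw [hu, Real.log_exp]
    calc ∫ t in (0:ℝ)..(1/2), t * θ ^ (q*t)
        = ∫ t in (0:ℝ)..(1/2), t * Real.exp (c*t) := by
          refine intervalIntegral.integral_congr fun t _ => ?_
          rw [hrw]
      _ = (Real.exp (c/2) * (c/2 - 1) + 1) / c^2 := aux_texp c hcne
      _ = g₁ (θ ^ (q/2)) / 4 := by
          rw [g₁, if_neg hune, hlogu, hu]
          field_simp
          ring

lemma aux_rpow_le_max {x c e : ℝ} (hx : 0 ≤ x) (hxc : x ≤ c) (he0 : 0 ≤ e) (he1 : e ≤ 1) :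
    x ^ e ≤ max 1 c := by
  rcases le_total x 1 with h | h
  · exact le_max_of_le_left (Real.rpow_le_one hx h he0)
  · have h2 : x ^ e ≤ x ^ (1:ℝ) := Real.rpow_le_rpow_of_exponent_le h he1
    rw [Real.rpow_one] at h2
    exact le_max_of_le_right (h2.trans hxc)

lemma holder_step {S : Set ℝ} (hS : MeasurableSet S) (hfin : volume S ≠ ⊤)
    (w z : ℝ → ℝ) (hwm : AEStronglyMeasurable w (volume.restrict S))
    (hzm : AEStronglyMeasurable z (volume.restrict S))
    {Cw Cz : ℝ} (hwb : ∀ x ∈ S, w x ∈ Set.Icc 0 Cw) (hzb : ∀ x ∈ S, z x ∈ Set.Icc 0 Cz)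
    {q : ℝ} (hq : 1 ≤ q) :
    ∫ x in S, w x * z x ≤
      (∫ x in S, w x) ^ (1 - 1/q) * (∫ x in S, w x * z x ^ q) ^ (1/q) := by
  haveI : IsFiniteMeasure (volume.restrict S) :=
    ⟨by rw [Measure.restrict_apply_univ]; exact lt_top_iff_ne_top.2 hfin⟩
  have hwae : ∀ᵐ x ∂volume.restrict S, w x ∈ Set.Icc 0 Cw :=
    (ae_restrict_iff' hS).2 (Filter.Eventually.of_forall hwb)
  have hzae : ∀ᵐ x ∂volume.restrict S, z x ∈ Set.Icc 0 Cz :=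
    (ae_restrict_iff' hS).2 (Filter.Eventually.of_forall hzb)
  obtain rfl | hq1 := hq.eq_or_lt
  · have e1 : (1:ℝ) - 1/1 = 0 := by norm_num
    have e2 : (1:ℝ)/1 = 1 := by norm_num
    rw [e1, e2, Real.rpow_zero, Real.rpow_one, one_mul]
    refine le_of_eq (integral_congr_ae ?_)
    filter_upwards with x
    rw [Real.rpow_one]
  · set p := q / (q - 1) with hp
    have hpq : p.HolderConjugate q := (Real.HolderConjugate.conjExponent hq1).symm
    have hp1 : 1 < p := hpq.lt
    have hq0 : (0:ℝ) < q := by linarith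
    have hp0 : (0:ℝ) < p := hpq.pos
    have hinv : 1/p = 1 - 1/q := by
      have := hpq.inv_add_inv_eq_one
      rw [inv_eq_one_div, inv_eq_one_div] at this
      linarith
    set F := fun x => (w x) ^ (1/p) with hF
    set G := fun x => (w x) ^ (1/q) * z x with hG
    have hFm : AEStronglyMeasurable F (volume.restrict S) :=
      (hwm.aemeasurable.pow aemeasurable_const).aestronglyMeasurable
    have hGm : AEStronglyMeasurable G (volume.restrict S) :=
      ((hwm.aemeasurable.pow aemeasurable_const).mul hzm.aemeasurable).aestronglyMeasurable
    have hFmem : MemLp F (ENNReal.ofReal p) (volume.restrict S) := by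
      refine MemLp.of_bound hFm (max 1 Cw) ?_
      filter_upwards [hwae] with x hx
      rw [Real.norm_eq_abs, abs_of_nonneg (Real.rpow_nonneg hx.1 _)]
      exact aux_rpow_le_max hx.1 hx.2 (by positivity) (by
        rw [div_le_one hp0]; linarith)
    have hGmem : MemLp G (ENNReal.ofReal q) (volume.restrict S) := by
      refine MemLp.of_bound hGm (max 1 Cw * max 1 Cz) ?_
      filter_upwards [hwae, hzae] with x hxw hxz
      rw [Real.norm_eq_abs, abs_of_nonneg (mul_nonneg (Real.rpow_nonneg hxw.1 _) hxz.1)]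
      refine mul_le_mul (aux_rpow_le_max hxw.1 hxw.2 (by positivity) (by
        rw [div_le_one hq0]; linarith)) (le_max_of_le_right hxz.2) hxz.1 (by positivity)
    have hFnn : 0 ≤ᵐ[volume.restrict S] F := by
      filter_upwards [hwae] with x hx
      exact Real.rpow_nonneg hx.1 _
    have hGnn : 0 ≤ᵐ[volume.restrict S] G := by
      filter_upwards [hwae, hzae] with x hxw hxz
      exact mul_nonneg (Real.rpow_nonneg hxw.1 _) hxz.1
    have H := MeasureTheory.integral_mul_le_Lp_mul_Lq_of_nonneg hpq hFnn hGnn hFmem hGmem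
    have e1 : ∫ x in S, F x * G x ∂volume = ∫ x in S, w x * z x := by
      refine integral_congr_ae ?_
      filter_upwards [hwae] with x hx
      simp only [hF, hG]
      rw [← mul_assoc, ← Real.rpow_add' hx.1 (by rw [hinv]; norm_num : 1/p + 1/q ≠ 0)]
      rw [show 1/p + 1/q = 1 by rw [hinv]; ring, Real.rpow_one]
    have e2 : ∫ x in S, F x ^ p ∂volume = ∫ x in S, w x := by
      refine integral_congr_ae ?_
      filter_upwards [hwae] with x hx
      simp only [hF, one_div]
      exact Real.rpow_inv_rpow hx.1 hp0.ne'
    have e3 : ∫ x in S, G x ^ q ∂volume = ∫ x in S, w x * z x ^ q := by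
      refine integral_congr_ae ?_
      filter_upwards [hwae, hzae] with x hxw hxz
      simp only [hG]
      rw [Real.mul_rpow (Real.rpow_nonneg hxw.1 _) hxz.1, one_div,
        Real.rpow_inv_rpow hxw.1 hq0.ne']
    rw [e1, e2, e3] at H
    rwa [hinv] at H



lemma aux_sub (α L q θ : ℝ) (hα : 0 < α) (hL : L ≠ 0) (hθ : 0 < θ) :
    ∫ x in α..(α * Real.exp (L * (1/2))),
        ((Real.log (x/α) / L) / x) * θ ^ (q * (Real.log (x/α) / L))
      = L * ∫ t in (0:ℝ)..(1/2), t * θ ^ (q*t) := by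
  set φ : ℝ → ℝ := fun t => α * Real.exp (L * t) with hφ
  set g : ℝ → ℝ := fun x => ((Real.log (x/α) / L) / x) * θ ^ (q * (Real.log (x/α) / L)) with hg
  have hφd : ∀ t ∈ Set.uIcc (0:ℝ) (1/2), HasDerivAt φ (α * L * Real.exp (L * t)) t := by
    intro t _
    have h1 : HasDerivAt (fun t : ℝ => L * t) L t := by
      simpa using (hasDerivAt_id t).const_mul L
    have h2 := ((Real.hasDerivAt_exp (L*t)).comp t h1).const_mul α
    refine h2.congr_deriv ?_
    ring
  have hφpos : ∀ t : ℝ, 0 < φ t := fun t => mul_pos hα (Real.exp_pos _)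
  have hgcont : ContinuousOn g (φ '' Set.uIcc (0:ℝ) (1/2)) := by
    have himg : φ '' Set.uIcc (0:ℝ) (1/2) ⊆ Set.Ioi (0:ℝ) := by
      rintro x ⟨t, _, rfl⟩; exact hφpos t
    refine ContinuousOn.mono ?_ himg
    have hE : ContinuousOn (fun x : ℝ => Real.log (x/α) / L) (Set.Ioi (0:ℝ)) := by
      refine ContinuousOn.div_const ?_ L
      refine ContinuousOn.log (continuousOn_id.div_const α) ?_
      intro x hx
      exact div_ne_zero (ne_of_gt hx) hα.ne'
    have hpow : ContinuousOn (fun x : ℝ => θ ^ (q * (Real.log (x/α) / L))) (Set.Ioi (0:ℝ)) := by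
      have hfe : (fun x : ℝ => θ ^ (q * (Real.log (x/α) / L)))
          = fun x => Real.exp (Real.log θ * (q * (Real.log (x/α) / L))) := by
        funext x; rw [Real.rpow_def_of_pos hθ]
      rw [hfe]
      exact Real.continuous_exp.comp_continuousOn
        (continuousOn_const.mul (continuousOn_const.mul hE))
    exact (hE.div continuousOn_id fun x hx => ne_of_gt hx).mul hpow
  have hφ'c : ContinuousOn (fun t => α * L * Real.exp (L * t)) (Set.uIcc (0:ℝ) (1/2)) := by
    fun_prop
  have key := intervalIntegral.integral_comp_smul_deriv' hφd hφ'c hgcont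
  have hφ0 : φ 0 = α := by simp [hφ]
  rw [hφ0] at key
  rw [← key]
  have hcongr : ∀ t ∈ Set.uIcc (0:ℝ) (1/2),
      (α * L * Real.exp (L * t)) • (g ∘ φ) t = L * (t * θ ^ (q*t)) := by
    intro t _
    have he : Real.exp (L * t) ≠ 0 := (Real.exp_pos _).ne'
    have h1 : φ t / α = Real.exp (L * t) := by
      rw [hφ]; field_simp
    have h2 : Real.log (φ t / α) / L = t := by
      rw [h1, Real.log_exp]
      field_simp
    simp only [Function.comp, hg, smul_eq_mul, h2]
    rw [hφ]
    field_simp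
  rw [intervalIntegral.integral_congr hcongr, intervalIntegral.integral_const_mul]

lemma aux_alg {L C g q : ℝ} (hL : 0 < L) (hC : 0 < C) (hg : 0 ≤ g) (hq : 1 ≤ q) :
    (L/8) ^ (1-1/q) * (C * (L * g / 4)) ^ (1/q)
      = L * (1/2:ℝ) ^ (3-1/q) * C ^ (1/q) * g ^ (1/q) := by
  have hq0 : (0:ℝ) < q := by linarith
  have h1 : (0:ℝ) ≤ 1 - 1/q := by
    rw [sub_nonneg, div_le_one hq0]; exact hq
  have e1 : L/8 = L * (1/8) := by ring
  have e2 : C * (L * g / 4) = C * L * g * (1/4) := by ring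
  rw [e1, e2]
  rw [Real.mul_rpow hL.le (by norm_num), Real.mul_rpow (by positivity) (by norm_num),
    Real.mul_rpow (by positivity) hg, Real.mul_rpow hC.le hL.le]
  have e3 : (1/8 : ℝ) = (1/2 : ℝ) ^ (3:ℝ) := by
    rw [show (3:ℝ) = ((3:ℕ):ℝ) by norm_num, Real.rpow_natCast]; norm_num
  have e4 : (1/4 : ℝ) = (1/2 : ℝ) ^ (2:ℝ) := by
    rw [show (2:ℝ) = ((2:ℕ):ℝ) by norm_num, Real.rpow_natCast]; norm_num
  rw [e3, e4, ← Real.rpow_mul (by norm_num : (0:ℝ) ≤ 1/2),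
    ← Real.rpow_mul (by norm_num : (0:ℝ) ≤ 1/2)]
  have e5 : L ^ (1-1/q) * L ^ (1/q) = L := by
    rw [← Real.rpow_add hL]; norm_num
  have e6 : (1/2:ℝ) ^ (3 * (1-1/q)) * (1/2:ℝ) ^ (2 * (1/q)) = (1/2:ℝ) ^ (3-1/q) := by
    rw [← Real.rpow_add (by norm_num : (0:ℝ) < 1/2)]
    ring_nf
  calc L ^ (1-1/q) * ((1/2:ℝ) ^ (3 * (1-1/q))) * (C ^ (1/q) * L ^ (1/q) * g ^ (1/q) * (1/2:ℝ) ^ (2 * (1/q)))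
      = (L ^ (1-1/q) * L ^ (1/q)) * ((1/2:ℝ) ^ (3 * (1-1/q)) * (1/2:ℝ) ^ (2 * (1/q))) * C ^ (1/q) * g ^ (1/q) := by ring
    _ = L * (1/2:ℝ) ^ (3-1/q) * C ^ (1/q) * g ^ (1/q) := by rw [e5, e6]


lemma half_estimate
    (c d : ℝ) (hc : 0 < c) (hcd : c < d)
    (f' : ℝ → ℝ) (hfm : AEStronglyMeasurable f' (volume.restrict (Set.Ioc c d)))
    (K : ℝ) (hK : ∀ x ∈ Set.Icc c d, |f' x| ≤ K)
    (T : ℝ → ℝ) (hTcont : ContinuousOn T (Set.Icc c d))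
    (hT : ∀ x ∈ Set.Icc c d, T x ∈ Set.Icc 0 (1/2))
    (L q C θ : ℝ) (hL : 0 < L) (hq : 1 ≤ q) (hC : 0 < C) (hθ : 0 < θ)
    (hTE : ∀ θ' : ℝ, 0 < θ' →
      ∫ x in c..d, (T x / x) * θ' ^ (q * T x) = L * (g₁ (θ' ^ (q/2)) / 4))
    (hPW : ∀ x ∈ Set.Icc c d, (x * |f' x|) ^ q ≤ C * θ ^ (q * T x)) :
    ∫ x in c..d, T x * |f' x| ≤
      L * (1/2:ℝ) ^ (3-1/q) * C ^ (1/q) * (g₁ (θ ^ (q/2))) ^ (1/q) := by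
  have hq0 : (0:ℝ) < q := lt_of_lt_of_le one_pos hq
  set S := Set.Ioc c d with hSdef
  have hS : MeasurableSet S := measurableSet_Ioc
  have hfin : volume S ≠ ⊤ := measure_Ioc_lt_top.ne
  haveI : IsFiniteMeasure (volume.restrict S) :=
    ⟨by rw [Measure.restrict_apply_univ]; exact lt_top_iff_ne_top.2 hfin⟩
  have hsub : S ⊆ Set.Icc c d := Set.Ioc_subset_Icc_self
  have hK0 : 0 ≤ K := le_trans (abs_nonneg _) (hK c ⟨le_refl c, hcd.le⟩)
  have hd0 : (0:ℝ) ≤ d := (hc.trans hcd).le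
  set w : ℝ → ℝ := fun x => T x / x with hwdef
  set z : ℝ → ℝ := fun x => x * |f' x| with hzdef
  have habs : AEStronglyMeasurable (fun x => |f' x|) (volume.restrict S) := by
    have hh : (fun x => |f' x|) = fun x => ‖f' x‖ := funext fun x => (Real.norm_eq_abs _).symm
    rw [hh]; exact hfm.norm
  have hwcont : ContinuousOn w (Set.Icc c d) :=
    hTcont.div continuousOn_id fun x hx => ne_of_gt (hc.trans_le hx.1)
  have hwm : AEStronglyMeasurable w (volume.restrict S) :=
    ((hwcont.mono hsub).aestronglyMeasurable hS)
  have hzm : AEStronglyMeasurable z (volume.restrict S) :=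
    (aemeasurable_id.mul habs.aemeasurable).aestronglyMeasurable
  have hwb : ∀ x ∈ S, w x ∈ Set.Icc 0 (1/(2*c)) := by
    intro x hx
    have hx0 : 0 < x := hc.trans hx.1
    refine ⟨div_nonneg (hT x (hsub hx)).1 hx0.le, ?_⟩
    have h1 : T x / x ≤ (1/2) / c :=
      div_le_div₀ (by norm_num) (hT x (hsub hx)).2 hc hx.1.le
    calc T x / x ≤ (1/2)/c := h1
      _ = 1/(2*c) := by ring
  have hzb : ∀ x ∈ S, z x ∈ Set.Icc 0 (d * K) := by
    intro x hx
    have hx0 : 0 < x := hc.trans hx.1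
    exact ⟨mul_nonneg hx0.le (abs_nonneg _),
      mul_le_mul hx.2 (hK x (hsub hx)) (abs_nonneg _) hd0⟩
  rw [intervalIntegral.integral_of_le hcd.le]
  have e0 : ∫ x in S, T x * |f' x| = ∫ x in S, w x * z x := by
    refine setIntegral_congr_fun hS fun x hx => ?_
    have hx0 : x ≠ 0 := (hc.trans hx.1).ne'
    show T x * |f' x| = T x / x * (x * |f' x|)
    field_simp
  rw [e0]
  have H := holder_step hS hfin w z hwm hzm hwb hzb hq
  have hW : ∫ x in S, w x = L / 8 := by
    have h1 := hTE 1 one_pos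
    rw [intervalIntegral.integral_of_le hcd.le] at h1
    calc ∫ x in S, w x = ∫ x in S, (T x / x) * (1:ℝ)^(q*T x) := by
          refine setIntegral_congr_fun hS fun x _ => ?_
          rw [Real.one_rpow, mul_one]
      _ = L * (g₁ ((1:ℝ) ^ (q/2)) / 4) := h1
      _ = L / 8 := by
          rw [Real.one_rpow, g₁, if_pos rfl]; ring
  have hθcont : ContinuousOn (fun x => θ ^ (q * T x)) (Set.Icc c d) := by
    have hfe : (fun x : ℝ => θ ^ (q * T x))
        = fun x => Real.exp (Real.log θ * (q * T x)) := by
      funext x; rw [Real.rpow_def_of_pos hθ]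
    rw [hfe]
    exact Real.continuous_exp.comp_continuousOn
      (continuousOn_const.mul (continuousOn_const.mul hTcont))
  have hIntR : IntegrableOn (fun x => w x * (C * θ ^ (q * T x))) S volume := by
    refine IntegrableOn.mono_set ?_ Set.Ioc_subset_Icc_self
    exact (hwcont.mul (continuousOn_const.mul hθcont)).integrableOn_Icc
  have hIntL : IntegrableOn (fun x => w x * z x ^ q) S volume := by
    refine memLp_one_iff_integrable.1 ?_
    refine MemLp.of_bound
      ((hwm.aemeasurable.mul (hzm.aemeasurable.pow aemeasurable_const)).aestronglyMeasurable)
      ((1/(2*c)) * (d*K) ^ q) ?_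
    refine (ae_restrict_iff' hS).2 (Filter.Eventually.of_forall fun x hx => ?_)
    have h1 := hwb x hx
    have h2 := hzb x hx
    rw [Real.norm_eq_abs, abs_of_nonneg (mul_nonneg h1.1 (Real.rpow_nonneg h2.1 _))]
    exact mul_le_mul h1.2 (Real.rpow_le_rpow h2.1 h2.2 hq0.le)
      (Real.rpow_nonneg h2.1 _) (by positivity)
  have hmono : ∫ x in S, w x * z x ^ q ≤ ∫ x in S, w x * (C * θ ^ (q * T x)) :=
    setIntegral_mono_on hIntL hIntR hS fun x hx =>
      mul_le_mul_of_nonneg_left (hPW x (hsub hx)) (hwb x hx).1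
  have hE : ∫ x in S, w x * (C * θ ^ (q * T x)) = C * (L * g₁ (θ^(q/2)) / 4) := by
    have h1 := hTE θ hθ
    rw [intervalIntegral.integral_of_le hcd.le] at h1
    calc ∫ x in S, w x * (C * θ ^ (q * T x))
        = ∫ x in S, C * ((T x / x) * θ ^ (q * T x)) := by
          refine setIntegral_congr_fun hS fun x _ => by ring
      _ = C * ∫ x in S, (T x / x) * θ ^ (q * T x) := integral_const_mul _ _
      _ = C * (L * g₁ (θ^(q/2)) / 4) := by rw [h1]; ring
  have hg0 : 0 ≤ g₁ (θ^(q/2)) := by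
    have h0 : 0 ≤ ∫ x in S, w x * (C * θ ^ (q * T x)) :=
      setIntegral_nonneg hS fun x hx => mul_nonneg (hwb x hx).1 (by positivity)
    rw [hE] at h0
    nlinarith [mul_pos hC hL]
  have hzq0 : 0 ≤ ∫ x in S, w x * z x ^ q :=
    setIntegral_nonneg hS fun x hx =>
      mul_nonneg (hwb x hx).1 (Real.rpow_nonneg (hzb x hx).1 _)
  calc ∫ x in S, w x * z x
      ≤ (∫ x in S, w x)^(1-1/q) * (∫ x in S, w x * z x ^ q)^(1/q) := H
    _ ≤ (L/8)^(1-1/q) * (C * (L * g₁ (θ^(q/2)) / 4))^(1/q) := by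
        rw [hW]
        refine mul_le_mul_of_nonneg_left ?_ (Real.rpow_nonneg (by positivity) _)
        exact Real.rpow_le_rpow hzq0 (hmono.trans_eq hE) (by positivity)
    _ = L * (1/2:ℝ) ^ (3-1/q) * C ^ (1/q) * (g₁ (θ^(q/2))) ^ (1/q) :=
        aux_alg hL hC hg0 hq



lemma pw_bound (f' : ℝ → ℝ) (q s : ℝ) (hq : 1 ≤ q) (hs0 : 0 < s) (hs1 : s ≤ 1)
    (a b : ℝ) (hconv : SGeometricallyConvexOn s (Set.Icc a b) (fun x => |f' x| ^ q))
    (u v : ℝ) (hu : u ∈ Set.Icc a b) (hv : v ∈ Set.Icc a b)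
    (hu0 : 0 < u) (hv0 : 0 < v) (hU : 1 ≤ |f' u|) (hV : 1 ≤ |f' v|)
    (t : ℝ) (ht : t ∈ Set.Icc (0:ℝ) 1) (x : ℝ) (hx : x = u ^ t * v ^ (1-t)) :
    (x * |f' x|) ^ q ≤
      ((v * |f' v| ^ s) ^ q * (|f' u| * |f' v|) ^ (q * (1-s)))
        * ((u * |f' u| ^ s) / (v * |f' v| ^ s)) ^ (q * t) := by
  have hq0 : (0:ℝ) < q := lt_of_lt_of_le one_pos hq
  set U := |f' u| with hUdef
  set V := |f' v| with hVdef
  have hU0 : (0:ℝ) < U := lt_of_lt_of_le one_pos hU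
  have hV0 : (0:ℝ) < V := lt_of_lt_of_le one_pos hV
  have hx0 : 0 < x := by rw [hx]; positivity
  have h1 : |f' x| ^ q ≤ (U^q) ^ (t^s) * (V^q) ^ ((1-t)^s) := by
    rw [hx]; exact hconv u hu v hv t ht
  have hUq1 : (1:ℝ) ≤ U ^ q := Real.one_le_rpow hU hq0.le
  have hVq1 : (1:ℝ) ≤ V ^ q := Real.one_le_rpow hV hq0.le
  have h2 : (U^q) ^ (t^s) ≤ (U^q) ^ (s*t + (1-s)) :=
    Real.rpow_le_rpow_of_exponent_le hUq1 (aux_tpow_le ht.1 ht.2 hs0 hs1)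
  have h3 : (V^q) ^ ((1-t)^s) ≤ (V^q) ^ (s*(1-t) + (1-s)) :=
    Real.rpow_le_rpow_of_exponent_le hVq1
      (aux_tpow_le (by linarith [ht.2]) (by linarith [ht.1]) hs0 hs1)
  have h4 : |f' x| ^ q ≤ U ^ (q*(s*t + (1-s))) * V ^ (q*(s*(1-t) + (1-s))) := by
    rw [Real.rpow_mul hU0.le, Real.rpow_mul hV0.le]
    calc |f' x| ^ q ≤ (U^q) ^ (t^s) * (V^q) ^ ((1-t)^s) := h1
      _ ≤ (U^q) ^ (s*t + (1-s)) * (V^q) ^ (s*(1-t) + (1-s)) :=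
          mul_le_mul h2 h3 (Real.rpow_nonneg (by positivity) _) (by positivity)
  have hxq : x ^ q = u ^ (q*t) * v ^ (q*(1-t)) := by
    rw [hx, Real.mul_rpow (by positivity) (by positivity),
      ← Real.rpow_mul hu0.le, ← Real.rpow_mul hv0.le]
    ring_nf
  have hRHS : ((v * V ^ s) ^ q * (U * V) ^ (q * (1-s)))
        * ((u * U ^ s) / (v * V ^ s)) ^ (q * t)
      = (u ^ (q*t) * v ^ (q*(1-t))) * (U ^ (q*(s*t + (1-s))) * V ^ (q*(s*(1-t) + (1-s)))) := by
    have key : ∀ (y e : ℝ), 0 < y → y ^ e = Real.exp (Real.log y * e) :=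
      fun y e hy => Real.rpow_def_of_pos hy e
    have hA : (0:ℝ) < u * U ^ s := by positivity
    have hB : (0:ℝ) < v * V ^ s := by positivity
    rw [key (v * V ^ s) q hB, key (U*V) (q*(1-s)) (by positivity),
      key ((u * U ^ s) / (v * V ^ s)) (q*t) (div_pos hA hB),
      key u (q*t) hu0, key v (q*(1-t)) hv0,
      key U (q*(s*t + (1-s))) hU0, key V (q*(s*(1-t) + (1-s))) hV0,
      Real.log_div hA.ne' hB.ne',
      Real.log_mul hu0.ne' (by positivity : U^s ≠ 0),
      Real.log_mul hv0.ne' (by positivity : V^s ≠ 0),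
      Real.log_mul hU0.ne' hV0.ne',
      Real.log_rpow hU0, Real.log_rpow hV0,
      ← Real.exp_add, ← Real.exp_add, ← Real.exp_add, ← Real.exp_add, ← Real.exp_add,
      Real.exp_eq_exp]
    ring
  rw [Real.mul_rpow hx0.le (abs_nonneg _), hRHS, hxq]
  exact mul_le_mul_of_nonneg_left h4 (by positivity)








theorem stmt_7
    (I : Set ℝ) (hI : I.OrdConnected) (hIpos : I ⊆ Set.Ioi (0:ℝ))
    (f f' : ℝ → ℝ) (hfpos : ∀ x ∈ I, 0 < f x)
    (a b : ℝ) (ha : a ∈ interior I) (hb : b ∈ interior I) (hab : a < b)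
    (hdiff : ∀ x ∈ interior I, HasDerivAt f (f' x) x)
    (hint : IntervalIntegrable f' volume a b)
    (q s : ℝ) (hq : 1 ≤ q) (hs : s ∈ Set.Ioc (0:ℝ) 1)
    (hconv : SGeometricallyConvexOn s (Set.Icc a b) (fun x => |f' x| ^ q))
    (hfa : 1 ≤ |f' a|) (hfb : 1 ≤ |f' b|) :
    |f (Real.sqrt (a * b)) - (1 / (Real.log b - Real.log a)) * ∫ x in a..b, f x / x| ≤
      Real.log (b / a) * (1 / 2 : ℝ) ^ (3 - 1 / q) *
        (a * |f' a| * |f' b| ^ (1 - s) * (g₁ ((b * |f' b| ^ s / (a * |f' a| ^ s)) ^ (q / 2))) ^ (1 / q)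
         + b * |f' b| * |f' a| ^ (1 - s) * (g₁ ((a * |f' a| ^ s / (b * |f' b| ^ s)) ^ (q / 2))) ^ (1 / q)) := by
  obtain ⟨hs0, hs1⟩ := hs
  have hq0 : (0:ℝ) < q := lt_of_lt_of_le one_pos hq
  have ha0 : (0:ℝ) < a := hIpos (interior_subset ha)
  have hb0 : (0:ℝ) < b := hIpos (interior_subset hb)
  have hA0 : (0:ℝ) < |f' a| := lt_of_lt_of_le one_pos hfa
  have hB0 : (0:ℝ) < |f' b| := lt_of_lt_of_le one_pos hfb
  set L : ℝ := Real.log b - Real.log a with hLdef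
  have hL0 : 0 < L := sub_pos.2 (Real.log_lt_log ha0 hab)
  have hLba : Real.log (b/a) = L := Real.log_div hb0.ne' ha0.ne'
  set G : ℝ := Real.sqrt (a*b) with hGdef
  have hGpos : 0 < G := Real.sqrt_pos.2 (by positivity)
  have hlogG : Real.log G = (Real.log a + Real.log b)/2 := by
    rw [hGdef, Real.log_sqrt (by positivity), Real.log_mul ha0.ne' hb0.ne']
  have haG : a < G := by
    have h := Real.sqrt_lt_sqrt (by positivity : (0:ℝ) ≤ a*a) (by nlinarith : a*a < a*b)
    rwa [Real.sqrt_mul_self ha0.le] at h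
  have hGb : G < b := by
    have h := Real.sqrt_lt_sqrt (by positivity : (0:ℝ) ≤ a*b) (by nlinarith : a*b < b*b)
    rwa [Real.sqrt_mul_self hb0.le] at h
  have hIccI : Set.Icc a b ⊆ I := hI.out (interior_subset ha) (interior_subset hb)
  have hsub : Set.Icc a b ⊆ interior I := by
    intro x hx
    rcases eq_or_lt_of_le hx.1 with h1 | h1
    · rwa [← h1]
    rcases eq_or_lt_of_le hx.2 with h2 | h2
    · rwa [h2]
    exact interior_maximal (fun y hy => hIccI ⟨hy.1.le, hy.2.le⟩) isOpen_Ioo ⟨h1, h2⟩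
  have hIcc1 : Set.Icc a G ⊆ Set.Icc a b := Set.Icc_subset_Icc_right hGb.le
  have hIcc2 : Set.Icc G b ⊆ Set.Icc a b := Set.Icc_subset_Icc_left haG.le
  have hfcont : ContinuousOn f (Set.Icc a b) := fun x hx =>
    ((hdiff x (hsub hx)).continuousAt).continuousWithinAt
  -- K bound for |f'|
  set M : ℝ := max (|f' a| ^ q) (|f' b| ^ q) with hMdef
  have hM1 : (1:ℝ) ≤ M := le_trans (Real.one_le_rpow hfa hq0.le) (le_max_left _ _)
  have hM0 : (0:ℝ) < M := lt_of_lt_of_le one_pos hM1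
  set K : ℝ := (M * M) ^ (1/q) with hKdef
  have hrep : ∀ x ∈ Set.Icc a b, ∃ t ∈ Set.Icc (0:ℝ) 1, x = b ^ t * a ^ (1-t) := by
    intro x hx
    have hx0 : 0 < x := lt_of_lt_of_le ha0 hx.1
    refine ⟨(Real.log x - Real.log a)/L, ⟨?_, ?_⟩, ?_⟩
    · exact div_nonneg (sub_nonneg.2 (Real.log_le_log ha0 hx.1)) hL0.le
    · rw [div_le_one hL0]
      have := Real.log_le_log hx0 hx.2
      linarith
    · have h1 : b ^ ((Real.log x - Real.log a)/L) * a ^ (1-(Real.log x - Real.log a)/L)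
          = Real.exp (Real.log b * ((Real.log x - Real.log a)/L)
              + Real.log a * (1-(Real.log x - Real.log a)/L)) := by
        rw [Real.rpow_def_of_pos hb0, Real.rpow_def_of_pos ha0, ← Real.exp_add]
      rw [h1, ← Real.exp_log hx0]
      congr 1
      field_simp
      rw [Real.log_exp, hLdef]
      ring
  have hKb : ∀ x ∈ Set.Icc a b, |f' x| ≤ K := by
    intro x hx
    obtain ⟨t, ht, hxr⟩ := hrep x hx
    have h1 : |f' x| ^ q ≤ (|f' b|^q) ^ (t^s) * (|f' a|^q) ^ ((1-t)^s) := by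
      rw [hxr]
      exact hconv b ⟨hab.le, le_refl b⟩ a ⟨le_refl a, hab.le⟩ t ht
    have hts : t^s ≤ 1 := Real.rpow_le_one ht.1 ht.2 hs0.le
    have h1ts : (1-t)^s ≤ 1 := Real.rpow_le_one (by linarith [ht.2]) (by linarith [ht.1]) hs0.le
    have h2 : (|f' b|^q) ^ (t^s) ≤ M := by
      calc (|f' b|^q) ^ (t^s) ≤ M ^ (t^s) :=
            Real.rpow_le_rpow (by positivity) (le_max_right _ _) (Real.rpow_nonneg ht.1 s)
        _ ≤ M ^ (1:ℝ) := Real.rpow_le_rpow_of_exponent_le hM1 hts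
        _ = M := Real.rpow_one M
    have h3 : (|f' a|^q) ^ ((1-t)^s) ≤ M := by
      calc (|f' a|^q) ^ ((1-t)^s) ≤ M ^ ((1-t)^s) :=
            Real.rpow_le_rpow (by positivity) (le_max_left _ _)
              (Real.rpow_nonneg (by linarith [ht.2]) s)
        _ ≤ M ^ (1:ℝ) := Real.rpow_le_rpow_of_exponent_le hM1 h1ts
        _ = M := Real.rpow_one M
    have h4 : |f' x| ^ q ≤ M * M :=
      h1.trans (mul_le_mul h2 h3 (by positivity) hM0.le)
    calc |f' x| = (|f' x| ^ q) ^ (1/q) := by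
          rw [one_div, Real.rpow_rpow_inv (abs_nonneg _) hq0.ne']
      _ ≤ (M*M) ^ (1/q) := Real.rpow_le_rpow (by positivity) h4 (by positivity)
  -- derivative of the weight
  have hderiv : ∀ (α : ℝ), 0 < α → ∀ x : ℝ, x ≠ 0 →
      HasDerivAt (fun y => Real.log (y/α) / L) (1/(L*x)) x := by
    intro α hα x hx
    have h1 : HasDerivAt (fun y : ℝ => y/α) (1/α) x := by
      simpa using (hasDerivAt_id x).div_const α
    have h2 : HasDerivAt (fun y : ℝ => Real.log (y/α)) ((x/α)⁻¹ * (1/α)) x :=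
      by have := (Real.hasDerivAt_log (div_ne_zero hx hα.ne')).comp x h1; exact this
    have h3 := h2.div_const L
    refine h3.congr_deriv ?_
    field_simp
  have huIcc1 : Set.uIcc a G = Set.Icc a G := Set.uIcc_of_le haG.le
  have huIcc2 : Set.uIcc G b = Set.Icc G b := Set.uIcc_of_le hGb.le
  have huIccab : Set.uIcc a b = Set.Icc a b := Set.uIcc_of_le hab.le
  have hxpos1 : ∀ x ∈ Set.Icc a G, 0 < x := fun x hx => lt_of_lt_of_le ha0 hx.1
  have hxpos2 : ∀ x ∈ Set.Icc G b, 0 < x := fun x hx => lt_of_lt_of_le hGpos hx.1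
  -- integrability pieces
  have hf'sub1 : IntervalIntegrable f' volume a G :=
    hint.mono_set (by rw [huIcc1, huIccab]; exact hIcc1)
  have hf'sub2 : IntervalIntegrable f' volume G b :=
    hint.mono_set (by rw [huIcc2, huIccab]; exact hIcc2)
  have hinvcont1 : ContinuousOn (fun x : ℝ => 1/(L*x)) (Set.Icc a G) := by
    refine continuousOn_const.div (continuousOn_const.mul continuousOn_id) fun x hx => ?_
    have := hxpos1 x hx
    positivity
  have hinvcont2 : ContinuousOn (fun x : ℝ => 1/(L*x)) (Set.Icc G b) := by
    refine continuousOn_const.div (continuousOn_const.mul continuousOn_id) fun x hx => ?_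
    have := hxpos2 x hx
    positivity
  have hinv1 : IntervalIntegrable (fun x : ℝ => 1/(L*x)) volume a G := by
    apply ContinuousOn.intervalIntegrable
    rwa [huIcc1]
  have hinv2 : IntervalIntegrable (fun x : ℝ => 1/(L*x)) volume G b := by
    apply ContinuousOn.intervalIntegrable
    rwa [huIcc2]
  -- integration by parts on [a,G]
  have hIBP1 := intervalIntegral.integral_mul_deriv_eq_deriv_mul
    (u := fun x => Real.log (x/a) / L) (v := f) (u' := fun x : ℝ => 1/(L*x)) (v' := f')
    (fun x hx => hderiv a ha0 x (hxpos1 x (huIcc1 ▸ hx)).ne')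
    (fun x hx => hdiff x (hsub (hIcc1 (huIcc1 ▸ hx))))
    hinv1 hf'sub1
  have hIBP2 := intervalIntegral.integral_mul_deriv_eq_deriv_mul
    (u := fun x => Real.log (x/b) / L) (v := f) (u' := fun x : ℝ => 1/(L*x)) (v' := f')
    (fun x hx => hderiv b hb0 x (hxpos2 x (huIcc2 ▸ hx)).ne')
    (fun x hx => hdiff x (hsub (hIcc2 (huIcc2 ▸ hx))))
    hinv2 hf'sub2
  have hT1G : Real.log (G/a) / L = 1/2 := by
    rw [Real.log_div hGpos.ne' ha0.ne', hlogG]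
    field_simp
    ring
  have hT1a : Real.log (a/a) / L = 0 := by
    rw [div_self ha0.ne', Real.log_one, zero_div]
  have hT2b : Real.log (b/b) / L = 0 := by
    rw [div_self hb0.ne', Real.log_one, zero_div]
  have hT2G : Real.log (G/b) / L = -(1/2) := by
    rw [Real.log_div hGpos.ne' hb0.ne', hlogG]
    field_simp
    ring
  beta_reduce at hIBP1 hIBP2
  rw [hT1G, hT1a] at hIBP1
  rw [hT2b, hT2G] at hIBP2
  -- splitting the middle integral
  have hp1 : IntervalIntegrable (fun x : ℝ => 1/(L*x) * f x) volume a G := by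
    apply ContinuousOn.intervalIntegrable
    rw [huIcc1]
    exact hinvcont1.mul (hfcont.mono hIcc1)
  have hp2 : IntervalIntegrable (fun x : ℝ => 1/(L*x) * f x) volume G b := by
    apply ContinuousOn.intervalIntegrable
    rw [huIcc2]
    exact hinvcont2.mul (hfcont.mono hIcc2)
  have hsplit := intervalIntegral.integral_add_adjacent_intervals hp1 hp2
  have hfrac : ∫ x in a..b, (1/(L*x)) * f x = (1/L) * ∫ x in a..b, f x / x := by
    rw [← intervalIntegral.integral_const_mul]
    refine intervalIntegral.integral_congr fun x hx => ?_
    rw [huIccab] at hx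
    have hx0 : x ≠ 0 := (lt_of_lt_of_le ha0 hx.1).ne'
    field_simp
  have hId : f G - (1/L) * ∫ x in a..b, f x / x
      = (∫ x in a..G, (Real.log (x/a) / L) * f' x)
        + (∫ x in G..b, (Real.log (x/b) / L) * f' x) := by
    rw [hIBP1, hIBP2, ← hfrac, ← hsplit]
    ring
  have habs : |f G - (1/L) * ∫ x in a..b, f x / x|
      ≤ (∫ x in a..G, (Real.log (x/a) / L) * |f' x|)
        + (∫ x in G..b, (Real.log (x/b) / (-L)) * |f' x|) := by
    rw [hId]
    refine (abs_add_le _ _).trans (add_le_add ?_ ?_)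
    · refine (intervalIntegral.abs_integral_le_integral_abs haG.le).trans
        (le_of_eq (intervalIntegral.integral_congr fun x hx => ?_))
      rw [huIcc1] at hx
      have hx0 : 0 < x := hxpos1 x hx
      rw [abs_mul, abs_of_nonneg]
      exact div_nonneg (Real.log_nonneg ((one_le_div ha0).2 hx.1)) hL0.le
    · refine (intervalIntegral.abs_integral_le_integral_abs hGb.le).trans
        (le_of_eq (intervalIntegral.integral_congr fun x hx => ?_))
      rw [huIcc2] at hx
      have hx0 : 0 < x := hxpos2 x hx
      rw [abs_mul, abs_of_nonpos]
      · rw [div_neg]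
      · refine div_nonpos_of_nonpos_of_nonneg ?_ hL0.le
        exact Real.log_nonpos (by positivity) ((div_le_one hb0).2 hx.2)
  have hfm1 : AEStronglyMeasurable f' (volume.restrict (Set.Ioc a G)) :=
    (hint.1.mono_set (Set.Ioc_subset_Ioc_right hGb.le)).aestronglyMeasurable
  have hfm2 : AEStronglyMeasurable f' (volume.restrict (Set.Ioc G b)) :=
    (hint.1.mono_set (Set.Ioc_subset_Ioc_left haG.le)).aestronglyMeasurable
  have hTcont1 : ContinuousOn (fun x : ℝ => Real.log (x/a) / L) (Set.Icc a G) := by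
    refine ContinuousOn.div_const ?_ L
    refine ContinuousOn.log (continuousOn_id.div_const a) fun x hx => ?_
    exact div_ne_zero (hxpos1 x hx).ne' ha0.ne'
  have hTcont2 : ContinuousOn (fun x : ℝ => Real.log (x/b) / (-L)) (Set.Icc G b) := by
    refine ContinuousOn.div_const ?_ (-L)
    refine ContinuousOn.log (continuousOn_id.div_const b) fun x hx => ?_
    exact div_ne_zero (hxpos2 x hx).ne' hb0.ne'
  have hT1mem : ∀ x ∈ Set.Icc a G, Real.log (x/a) / L ∈ Set.Icc (0:ℝ) (1/2) := by
    intro x hx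
    have hx0 := hxpos1 x hx
    constructor
    · exact div_nonneg (Real.log_nonneg ((one_le_div ha0).2 hx.1)) hL0.le
    · rw [div_le_iff₀ hL0, Real.log_div hx0.ne' ha0.ne']
      have h1 : Real.log x ≤ Real.log G := Real.log_le_log hx0 hx.2
      rw [hlogG] at h1
      rw [hLdef]
      linarith
  have hT2mem : ∀ x ∈ Set.Icc G b, Real.log (x/b) / (-L) ∈ Set.Icc (0:ℝ) (1/2) := by
    intro x hx
    have hx0 := hxpos2 x hx
    have hlog : Real.log (x/b) ≤ 0 :=
      Real.log_nonpos (by positivity) ((div_le_one hb0).2 hx.2)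
    constructor
    · rw [div_neg, ← neg_div]
      exact div_nonneg (neg_nonneg.2 hlog) hL0.le
    · rw [div_le_iff_of_neg (by linarith : -L < 0), Real.log_div hx0.ne' hb0.ne']
      have h1 : Real.log G ≤ Real.log x := Real.log_le_log hGpos hx.1
      rw [hlogG] at h1
      rw [hLdef]
      linarith
  have hGe1 : a * Real.exp (L * (1/2)) = G := by
    calc a * Real.exp (L*(1/2)) = Real.exp (Real.log a) * Real.exp (L*(1/2)) := by
          rw [Real.exp_log ha0]
      _ = Real.exp (Real.log a + L*(1/2)) := (Real.exp_add _ _).symm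
      _ = Real.exp (Real.log G) := by
          congr 1
          rw [hlogG, hLdef]
          ring
      _ = G := Real.exp_log hGpos
  have hGe2 : b * Real.exp (-L * (1/2)) = G := by
    calc b * Real.exp (-L*(1/2)) = Real.exp (Real.log b) * Real.exp (-L*(1/2)) := by
          rw [Real.exp_log hb0]
      _ = Real.exp (Real.log b + -L*(1/2)) := (Real.exp_add _ _).symm
      _ = Real.exp (Real.log G) := by
          congr 1
          rw [hlogG, hLdef]
          ring
      _ = G := Real.exp_log hGpos
  have hTE1 : ∀ θ' : ℝ, 0 < θ' →
      ∫ x in a..G, ((Real.log (x/a) / L) / x) * θ' ^ (q * (Real.log (x/a) / L))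
        = L * (g₁ (θ' ^ (q/2)) / 4) := by
    intro θ' hθ'
    rw [← hGe1, aux_sub a L q θ' ha0 hL0.ne' hθ', aux_J hθ' hq0]
  have hTE2 : ∀ θ' : ℝ, 0 < θ' →
      ∫ x in G..b, ((Real.log (x/b) / (-L)) / x) * θ' ^ (q * (Real.log (x/b) / (-L)))
        = L * (g₁ (θ' ^ (q/2)) / 4) := by
    intro θ' hθ'
    have h := aux_sub b (-L) q θ' hb0 (neg_ne_zero.2 hL0.ne') hθ'
    rw [hGe2, intervalIntegral.integral_symm G b, aux_J hθ' hq0] at h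
    linarith [h]
  have hPW1 : ∀ x ∈ Set.Icc a G, (x * |f' x|) ^ q ≤
      ((a * |f' a| ^ s) ^ q * (|f' b| * |f' a|) ^ (q * (1-s)))
        * ((b * |f' b| ^ s) / (a * |f' a| ^ s)) ^ (q * (Real.log (x/a) / L)) := by
    intro x hx
    have hx0 := hxpos1 x hx
    have ht : Real.log (x/a) / L ∈ Set.Icc (0:ℝ) 1 := by
      have h := hT1mem x hx
      exact ⟨h.1, h.2.trans (by norm_num)⟩
    have hxr : x = b ^ (Real.log (x/a) / L) * a ^ (1-(Real.log (x/a) / L)) := by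
      have h1 : b ^ (Real.log (x/a) / L) * a ^ (1-(Real.log (x/a) / L))
          = Real.exp (Real.log b * (Real.log (x/a) / L)
              + Real.log a * (1-(Real.log (x/a) / L))) := by
        rw [Real.rpow_def_of_pos hb0, Real.rpow_def_of_pos ha0, ← Real.exp_add]
      rw [h1]
      have h2 : Real.log b * (Real.log (x/a)/L) + Real.log a * (1 - Real.log (x/a)/L)
          = Real.log x := by
        rw [Real.log_div hx0.ne' ha0.ne']
        field_simp
        ring
      rw [h2, Real.exp_log hx0]
    exact pw_bound f' q s hq hs0 hs1 a b hconv b a ⟨hab.le, le_refl b⟩ ⟨le_refl a, hab.le⟩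
      hb0 ha0 hfb hfa _ ht x hxr
  have hPW2 : ∀ x ∈ Set.Icc G b, (x * |f' x|) ^ q ≤
      ((b * |f' b| ^ s) ^ q * (|f' a| * |f' b|) ^ (q * (1-s)))
        * ((a * |f' a| ^ s) / (b * |f' b| ^ s)) ^ (q * (Real.log (x/b) / (-L))) := by
    intro x hx
    have hx0 := hxpos2 x hx
    have ht : Real.log (x/b) / (-L) ∈ Set.Icc (0:ℝ) 1 := by
      have h := hT2mem x hx
      exact ⟨h.1, h.2.trans (by norm_num)⟩
    have hxr : x = a ^ (Real.log (x/b) / (-L)) * b ^ (1-(Real.log (x/b) / (-L))) := by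
      have h1 : a ^ (Real.log (x/b) / (-L)) * b ^ (1-(Real.log (x/b) / (-L)))
          = Real.exp (Real.log a * (Real.log (x/b) / (-L))
              + Real.log b * (1-(Real.log (x/b) / (-L)))) := by
        rw [Real.rpow_def_of_pos ha0, Real.rpow_def_of_pos hb0, ← Real.exp_add]
      rw [h1]
      have h2 : Real.log a * (Real.log (x/b)/(-L)) + Real.log b * (1 - Real.log (x/b)/(-L))
          = Real.log x := by
        rw [Real.log_div hx0.ne' hb0.ne']
        have hne : Real.log a - Real.log b ≠ 0 :=
          sub_ne_zero.2 (ne_of_lt (Real.log_lt_log ha0 hab))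
        have hL' : -L = Real.log a - Real.log b := by rw [hLdef]; ring
        rw [hL']
        calc Real.log a * ((Real.log x - Real.log b) / (Real.log a - Real.log b))
              + Real.log b * (1 - (Real.log x - Real.log b) / (Real.log a - Real.log b))
            = Real.log b + ((Real.log x - Real.log b) / (Real.log a - Real.log b))
                * (Real.log a - Real.log b) := by ring
          _ = Real.log b + (Real.log x - Real.log b) := by rw [div_mul_cancel₀ _ hne]
          _ = Real.log x := by ring
      rw [h2, Real.exp_log hx0]
    exact pw_bound f' q s hq hs0 hs1 a b hconv a b ⟨le_refl a, hab.le⟩ ⟨hab.le, le_refl b⟩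
      ha0 hb0 hfa hfb _ ht x hxr
  have hH1 := half_estimate a G ha0 haG f' hfm1 K (fun x hx => hKb x (hIcc1 hx))
      (fun x => Real.log (x/a) / L) hTcont1 hT1mem L q
      ((a * |f' a| ^ s) ^ q * (|f' b| * |f' a|) ^ (q * (1-s)))
      ((b * |f' b| ^ s) / (a * |f' a| ^ s)) hL0 hq (by positivity) (by positivity)
      hTE1 hPW1
  have hH2 := half_estimate G b hGpos hGb f' hfm2 K (fun x hx => hKb x (hIcc2 hx))
      (fun x => Real.log (x/b) / (-L)) hTcont2 hT2mem L q
      ((b * |f' b| ^ s) ^ q * (|f' a| * |f' b|) ^ (q * (1-s)))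
      ((a * |f' a| ^ s) / (b * |f' b| ^ s)) hL0 hq (by positivity) (by positivity)
      hTE2 hPW2
  have key : ∀ (y e : ℝ), 0 < y → y ^ e = Real.exp (Real.log y * e) :=
    fun y e hy => Real.rpow_def_of_pos hy e
  have hC1q : (((a * |f' a| ^ s) ^ q * (|f' b| * |f' a|) ^ (q * (1-s))) : ℝ) ^ (1/q)
      = a * |f' a| * |f' b| ^ (1-s) := by
    rw [key (a * |f' a| ^ s) q (by positivity),
      key (|f' b| * |f' a|) (q*(1-s)) (by positivity),
      ← Real.exp_add, key _ (1/q) (Real.exp_pos _), Real.log_exp,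
      key (|f' b|) (1-s) hB0,
      Real.log_mul ha0.ne' (by positivity : |f' a| ^ s ≠ 0),
      Real.log_mul hB0.ne' hA0.ne', Real.log_rpow hA0]
    rw [show a * |f' a| * Real.exp (Real.log |f' b| * (1-s))
        = Real.exp (Real.log a + Real.log |f' a| + Real.log |f' b| * (1-s)) from by
      rw [Real.exp_add, Real.exp_add, Real.exp_log ha0, Real.exp_log hA0]]
    rw [Real.exp_eq_exp]
    field_simp
    ring
  have hC2q : (((b * |f' b| ^ s) ^ q * (|f' a| * |f' b|) ^ (q * (1-s))) : ℝ) ^ (1/q)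
      = b * |f' b| * |f' a| ^ (1-s) := by
    rw [key (b * |f' b| ^ s) q (by positivity),
      key (|f' a| * |f' b|) (q*(1-s)) (by positivity),
      ← Real.exp_add, key _ (1/q) (Real.exp_pos _), Real.log_exp,
      key (|f' a|) (1-s) hA0,
      Real.log_mul hb0.ne' (by positivity : |f' b| ^ s ≠ 0),
      Real.log_mul hA0.ne' hB0.ne', Real.log_rpow hB0]
    rw [show b * |f' b| * Real.exp (Real.log |f' a| * (1-s))
        = Real.exp (Real.log b + Real.log |f' b| + Real.log |f' a| * (1-s)) from by
      rw [Real.exp_add, Real.exp_add, Real.exp_log hb0, Real.exp_log hB0]]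
    rw [Real.exp_eq_exp]
    field_simp
    ring
  rw [hLba]
  calc |f G - 1/L * ∫ x in a..b, f x / x|
      ≤ (∫ x in a..G, (Real.log (x/a) / L) * |f' x|)
        + (∫ x in G..b, (Real.log (x/b) / (-L)) * |f' x|) := habs
    _ ≤ L * (1/2:ℝ) ^ (3-1/q)
          * (((a * |f' a| ^ s) ^ q * (|f' b| * |f' a|) ^ (q * (1-s))) ^ (1/q))
          * (g₁ (((b * |f' b| ^ s) / (a * |f' a| ^ s)) ^ (q/2))) ^ (1/q)
        + L * (1/2:ℝ) ^ (3-1/q)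
          * (((b * |f' b| ^ s) ^ q * (|f' a| * |f' b|) ^ (q * (1-s))) ^ (1/q))
          * (g₁ (((a * |f' a| ^ s) / (b * |f' b| ^ s)) ^ (q/2))) ^ (1/q) :=
        add_le_add hH1 hH2
    _ = L * (1 / 2 : ℝ) ^ (3 - 1 / q) *
        (a * |f' a| * |f' b| ^ (1 - s) *
            (g₁ ((b * |f' b| ^ s / (a * |f' a| ^ s)) ^ (q / 2))) ^ (1 / q)
         + b * |f' b| * |f' a| ^ (1 - s) *
            (g₁ ((a * |f' a| ^ s / (b * |f' b| ^ s)) ^ (q / 2))) ^ (1 / q)) := by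
        rw [hC1q, hC2q]
        ring
end
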